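/- arXiv:2504.03592 — 8 statements merged into one kernel-verified Lean document; each statement's English description precedes it below -/
import Mathlib

section
/- Let X ⊆ ℝ^m and Y ⊆ ℝ^n be nonempty, compact, convex sets, and let f : ℝ^m × ℝ^n → ℝ be continuous such that for every y ∈ Y the map x ↦ f(x,y) is convex on X, and for every x ∈ X the map y ↦ f(x,y) is concave on Y. Then the minimax equality holds: min_{x∈X} max_{y∈Y} f(x,y) = max_{y∈Y} min_{x∈X} f(x,y), where all the indicated minima and maxima are attained. -/
open Set Filter Topology

/-- Projection along a compact set of a closed sublevel condition is closed. -/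
private lemma mm_proj_closed {E : Type*} [TopologicalSpace E] [FirstCountableTopology E] {A : Set E} (hA : IsCompact A)
    {g : E → ℝ → ℝ} (hg : Continuous fun p : E × ℝ => g p.1 p.2) (c : ℝ) :
    IsClosed {t : ℝ | ∃ x ∈ A, g x t ≤ c} := by
  apply IsSeqClosed.isClosed
  intro ts t hts hlim
  choose xs hxs hxle using hts
  obtain ⟨x, hxA, φ, hφ, hxlim⟩ := hA.tendsto_subseq hxs
  refine ⟨x, hxA, ?_⟩
  have htend : Tendsto (fun k => g (xs (φ k)) (ts (φ k))) atTop (𝓝 (g x t)) :=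
    (hg.tendsto (x, t)).comp (hxlim.prodMk_nhds (hlim.comp hφ.tendsto_atTop))
  exact le_of_tendsto htend (Eventually.of_forall fun k => hxle (φ k))

/-- A function that is "lower semicontinuous" in the eventual sense attains its minimum
on a nonempty compact set. -/
private lemma mm_exists_min {E : Type*} [TopologicalSpace E] {X : Set E}
    (hcp : IsCompact X) (hne : X.Nonempty) {g : E → ℝ}
    (hg : ∀ x ∈ X, ∀ c < g x, ∀ᶠ z in 𝓝 x, c < g z) :
    ∃ x₀ ∈ X, ∀ x ∈ X, g x₀ ≤ g x := by
  by_contra hcon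
  push_neg at hcon
  have cover : ∀ z (hz : z ∈ X), {z' | g (hcon z hz).choose < g z'} ∈ 𝓝 z := by
    intro z hz
    obtain ⟨hw, hlt⟩ := (hcon z hz).choose_spec
    exact hg z hz _ hlt
  obtain ⟨t, ht⟩ := hcp.elim_nhds_subcover' (fun z hz => {z' | g (hcon z hz).choose < g z'}) cover
  have htne : t.Nonempty := by
    obtain ⟨x, hx⟩ := hne
    obtain ⟨z, hz, -⟩ := Set.mem_iUnion₂.mp (ht hx)
    exact ⟨z, hz⟩
  obtain ⟨z₀, hz₀t, hz₀min⟩ := t.exists_min_image (fun z => g (hcon z.1 z.2).choose) htne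
  have hwX : (hcon z₀.1 z₀.2).choose ∈ X := (hcon z₀.1 z₀.2).choose_spec.1
  obtain ⟨z₁, hz₁t, hz₁⟩ := Set.mem_iUnion₂.mp (ht hwX)
  exact absurd (hz₀min z₁ hz₁t) (not_le.mpr hz₁)

private lemma mm_two {E F : Type*} [NormedAddCommGroup E] [NormedSpace ℝ E]
    [NormedAddCommGroup F] [NormedSpace ℝ F]
    {X : Set E} {Y : Set F} (hYcv : Convex ℝ Y)
    {f : E → F → ℝ} (hf : Continuous fun p : E × F => f p.1 p.2)
    (hfx : ∀ y ∈ Y, ConvexOn ℝ X fun x => f x y)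
    (hfy : ∀ x ∈ X, ConcaveOn ℝ Y fun y => f x y)
    {c : ℝ} {X' : Set E} (hsub : X' ⊆ X) (hcp : IsCompact X') (hcv : Convex ℝ X')
    {y1 y2 : F} (hy1 : y1 ∈ Y) (hy2 : y2 ∈ Y)
    (h : ∀ x ∈ X', c < f x y1 ∨ c < f x y2) :
    ∃ y ∈ Y, ∀ x ∈ X', c < f x y := by
  by_contra hcon
  push_neg at hcon
  set yt : ℝ → F := fun t => (1 - t) • y1 + t • y2 with hyt_def
  have hyt0 : yt 0 = y1 := by simp [hyt_def]
  have hyt1 : yt 1 = y2 := by simp [hyt_def]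
  have hytY : ∀ t ∈ Set.Icc (0:ℝ) 1, yt t ∈ Y := fun t ht =>
    hYcv hy1 hy2 (by linarith [ht.2]) ht.1 (by ring)
  set C : ℝ → Set E := fun t => X' ∩ {x | f x (yt t) ≤ c} with hC_def
  have contx : ∀ y, Continuous fun x => f x y := fun y =>
    hf.comp (continuous_id.prodMk continuous_const)
  have hCcp : ∀ t, IsCompact (C t) := fun t =>
    hcp.inter_right (isClosed_le (contx _) continuous_const)
  have hCcv : ∀ t ∈ Set.Icc (0:ℝ) 1, Convex ℝ (C t) := by
    intro t ht
    exact ((hfx _ (hytY t ht)).subset hsub hcv).convex_le c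
  have hdisj : Disjoint (C 0) (C 1) := by
    rw [Set.disjoint_left]
    rintro x ⟨hxX, hle1⟩ ⟨-, hle2⟩
    rw [Set.mem_setOf_eq, hyt0] at hle1
    rw [Set.mem_setOf_eq, hyt1] at hle2
    rcases h x hxX with h1 | h2
    · exact absurd hle1 (not_le.mpr h1)
    · exact absurd hle2 (not_le.mpr h2)
  have hCsub : ∀ t ∈ Set.Icc (0:ℝ) 1, C t ⊆ C 0 ∪ C 1 := by
    rintro t ht x ⟨hxX, hxle⟩
    rw [Set.mem_setOf_eq] at hxle
    rcases le_or_gt (f x y1) c with h1 | h1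
    · exact Or.inl ⟨hxX, by rw [Set.mem_setOf_eq, hyt0]; exact h1⟩
    rcases le_or_gt (f x y2) c with h2 | h2
    · exact Or.inr ⟨hxX, by rw [Set.mem_setOf_eq, hyt1]; exact h2⟩
    exfalso
    have hcc := (hfy x (hsub hxX)).2 hy1 hy2 (by linarith [ht.2] : (0:ℝ) ≤ 1 - t) ht.1
      (by ring)
    rw [smul_eq_mul, smul_eq_mul] at hcc
    have hcc' : (1 - t) * f x y1 + t * f x y2 ≤ f x (yt t) := hcc
    rcases ht.2.lt_or_eq with hlt | heq
    · nlinarith [mul_pos (by linarith : (0:ℝ) < 1 - t) (sub_pos.mpr h1),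
        mul_nonneg ht.1 (sub_pos.mpr h2).le]
    · subst heq
      norm_num at hcc'
      linarith
  obtain ⟨U, V, hUo, hVo, hAU, hBV, hUV⟩ :=
    SeparatedNhds.of_isCompact_isCompact (hCcp 0) (hCcp 1) hdisj
  have hCor : ∀ t ∈ Set.Icc (0:ℝ) 1, C t ⊆ C 0 ∨ C t ⊆ C 1 := by
    intro t ht
    have hc : C t ⊆ U ∪ V := (hCsub t ht).trans (Set.union_subset_union hAU hBV)
    have hpre : IsPreconnected (C t) := (hCcv t ht).isPreconnected
    rcases hpre.subset_or_subset hUo hVo hUV hc with hU' | hV'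
    · left
      intro x hx
      rcases hCsub t ht hx with hx0 | hx1
      · exact hx0
      · exact absurd (hBV hx1) (Set.disjoint_left.mp hUV (hU' hx))
    · right
      intro x hx
      rcases hCsub t ht hx with hx0 | hx1
      · exact absurd (hAU hx0) (Set.disjoint_right.mp hUV (hV' hx))
      · exact hx1
  -- the two closed pieces
  have hytc : Continuous yt :=
    ((continuous_const.sub continuous_id).smul continuous_const).add
      (continuous_id.smul continuous_const)
  have hgc : Continuous fun p : E × ℝ => f p.1 (yt p.2) :=
    hf.comp (continuous_fst.prodMk (hytc.comp continuous_snd))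
  set TA : Set ℝ := Set.Icc 0 1 ∩ {t | ∃ x ∈ C 0, f x (yt t) ≤ c} with hTA_def
  set TB : Set ℝ := Set.Icc 0 1 ∩ {t | ∃ x ∈ C 1, f x (yt t) ≤ c} with hTB_def
  have hTAc : IsClosed TA := isClosed_Icc.inter (mm_proj_closed (hCcp 0) hgc c)
  have hTBc : IsClosed TB := isClosed_Icc.inter (mm_proj_closed (hCcp 1) hgc c)
  have hCne : ∀ t ∈ Set.Icc (0:ℝ) 1, (C t).Nonempty := by
    intro t ht
    obtain ⟨x, hxX, hxle⟩ := hcon (yt t) (hytY t ht)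
    exact ⟨x, hxX, hxle⟩
  have hcover : Set.Icc (0:ℝ) 1 ⊆ TA ∪ TB := by
    intro t ht
    obtain ⟨x, hx⟩ := hCne t ht
    rcases hCor t ht with hA | hB
    · exact Or.inl ⟨ht, x, hA hx, hx.2⟩
    · exact Or.inr ⟨ht, x, hB hx, hx.2⟩
  have h0 : (0:ℝ) ∈ Set.Icc (0:ℝ) 1 ∩ TA := by
    obtain ⟨x, hx⟩ := hCne 0 (by norm_num)
    exact ⟨by norm_num, by norm_num, x, hx, hx.2⟩
  have h1 : (1:ℝ) ∈ Set.Icc (0:ℝ) 1 ∩ TB := by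
    obtain ⟨x, hx⟩ := hCne 1 (by norm_num)
    exact ⟨by norm_num, by norm_num, x, hx, hx.2⟩
  obtain ⟨t, htI, htA, htB⟩ := (isPreconnected_closed_iff.mp isPreconnected_Icc) TA TB
    hTAc hTBc hcover ⟨0, h0⟩ ⟨1, h1⟩
  obtain ⟨-, x, hxA, hxle⟩ := htA
  obtain ⟨-, x', hx'B, hx'le⟩ := htB
  have hxCt : x ∈ C t := ⟨hxA.1, hxle⟩
  have hx'Ct : x' ∈ C t := ⟨hx'B.1, hx'le⟩
  rcases hCor t htI with hA | hB
  · exact Set.disjoint_left.mp hdisj (hA hx'Ct) hx'B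
  · exact Set.disjoint_left.mp hdisj hxA (hB hxCt)

private lemma mm_list {E F : Type*} [NormedAddCommGroup E] [NormedSpace ℝ E]
    [NormedAddCommGroup F] [NormedSpace ℝ F]
    {X : Set E} {Y : Set F} (hYne : Y.Nonempty) (hYcv : Convex ℝ Y)
    {f : E → F → ℝ} (hf : Continuous fun p : E × F => f p.1 p.2)
    (hfx : ∀ y ∈ Y, ConvexOn ℝ X fun x => f x y)
    (hfy : ∀ x ∈ X, ConcaveOn ℝ Y fun y => f x y)
    {c : ℝ} (l : List F) (hl : ∀ y ∈ l, y ∈ Y) :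
    ∀ X' : Set E, X' ⊆ X → IsCompact X' → Convex ℝ X' →
      (∀ x ∈ X', ∃ y ∈ l, c < f x y) →
      ∃ y ∈ Y, ∀ x ∈ X', c < f x y := by
  induction l with
  | nil =>
    intro X' _ _ _ hx
    obtain ⟨y, hy⟩ := hYne
    exact ⟨y, hy, fun x hx' => absurd (hx x hx') (by simp)⟩
  | cons y₀ l ih =>
    intro X' hsub hcp hcv hx
    have hy₀Y : y₀ ∈ Y := hl y₀ List.mem_cons_self
    have hlY : ∀ y ∈ l, y ∈ Y := fun y hy => hl y (List.mem_cons_of_mem y₀ hy)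
    set X'' : Set E := X' ∩ {x | f x y₀ ≤ c} with hX''
    have hsub'' : X'' ⊆ X' := Set.inter_subset_left
    have hcp'' : IsCompact X'' :=
      hcp.inter_right (isClosed_le (hf.comp (continuous_id.prodMk continuous_const))
        continuous_const)
    have hcv'' : Convex ℝ X'' := ((hfx y₀ hy₀Y).subset hsub hcv).convex_le c
    have hx'' : ∀ x ∈ X'', ∃ y ∈ l, c < f x y := by
      rintro x ⟨hxX', hxle⟩
      obtain ⟨y, hy, hlt⟩ := hx x hxX'
      rcases List.mem_cons.mp hy with rfl | hy'
      · exact absurd hxle (not_le.mpr hlt)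
      · exact ⟨y, hy', hlt⟩
    obtain ⟨y', hy'Y, hy'⟩ := ih hlY X'' (hsub''.trans hsub) hcp'' hcv'' hx''
    apply mm_two hYcv hf hfx hfy hsub hcp hcv hy₀Y hy'Y
    intro x hxX'
    rcases le_or_gt (f x y₀) c with hle | hlt
    · exact Or.inr (hy' x ⟨hxX', hle⟩)
    · exact Or.inl hlt


/-- Generalized von Neumann minimax theorem: for nonempty compact convex sets
`X ⊆ ℝ^m`, `Y ⊆ ℝ^n` and a continuous convex–concave function `f`, the minimax
equality holds and all indicated minima and maxima are attained. -/
theorem minimax_convex_concave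
    {m n : ℕ}
    (X : Set (EuclideanSpace ℝ (Fin m))) (Y : Set (EuclideanSpace ℝ (Fin n)))
    (hXne : X.Nonempty) (hXcp : IsCompact X) (hXcv : Convex ℝ X)
    (hYne : Y.Nonempty) (hYcp : IsCompact Y) (hYcv : Convex ℝ Y)
    (f : EuclideanSpace ℝ (Fin m) → EuclideanSpace ℝ (Fin n) → ℝ)
    (hf : Continuous fun p : EuclideanSpace ℝ (Fin m) × EuclideanSpace ℝ (Fin n) => f p.1 p.2)
    (hfx : ∀ y ∈ Y, ConvexOn ℝ X fun x => f x y)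
    (hfy : ∀ x ∈ X, ConcaveOn ℝ Y fun y => f x y) :
    (∀ x ∈ X, ∃ y₀ ∈ Y, IsGreatest ((f x) '' Y) (f x y₀)) ∧
    (∀ y ∈ Y, ∃ x₀ ∈ X, IsLeast ((fun x => f x y) '' X) (f x₀ y)) ∧
    (∃ x₀ ∈ X, IsLeast ((fun x => sSup ((f x) '' Y)) '' X) (sSup ((f x₀) '' Y))) ∧
    (∃ y₀ ∈ Y, IsGreatest ((fun y => sInf ((fun x => f x y) '' X)) '' Y)
      (sInf ((fun x => f x y₀) '' X))) ∧
    sInf ((fun x => sSup ((f x) '' Y)) '' X)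
      = sSup ((fun y => sInf ((fun x => f x y) '' X)) '' Y) := by
  have contx : ∀ y, Continuous fun x => f x y := fun y =>
    hf.comp (continuous_id.prodMk continuous_const)
  have conty : ∀ x, Continuous fun y => f x y := fun x =>
    hf.comp (continuous_const.prodMk continuous_id)
  have hbddA : ∀ x, BddAbove (f x '' Y) := fun x => (hYcp.image (conty x)).bddAbove
  have hbddB : ∀ y, BddBelow ((fun x => f x y) '' X) := fun y => (hXcp.image (contx y)).bddBelow
  have hne1 : ∀ x, (f x '' Y).Nonempty := fun x => hYne.image _
  have hne2 : ∀ y, ((fun x => f x y) '' X).Nonempty := fun y => hXne.image _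
  set g : EuclideanSpace ℝ (Fin m) → ℝ := fun x => sSup (f x '' Y) with hg_def
  set h : EuclideanSpace ℝ (Fin n) → ℝ := fun y => sInf ((fun x => f x y) '' X) with hh_def
  -- part 1
  have part1 : ∀ x ∈ X, ∃ y₀ ∈ Y, IsGreatest ((f x) '' Y) (f x y₀) := by
    intro x hx
    obtain ⟨y₀, hy₀Y, hmax⟩ := hYcp.exists_isMaxOn hYne (conty x).continuousOn
    refine ⟨y₀, hy₀Y, Set.mem_image_of_mem _ hy₀Y, ?_⟩
    rintro v ⟨y, hy, rfl⟩
    exact isMaxOn_iff.mp hmax y hy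
  -- part 2
  have part2 : ∀ y ∈ Y, ∃ x₀ ∈ X, IsLeast ((fun x => f x y) '' X) (f x₀ y) := by
    intro y hy
    obtain ⟨x₀, hx₀X, hmin⟩ := hXcp.exists_isMinOn hXne (contx y).continuousOn
    refine ⟨x₀, hx₀X, Set.mem_image_of_mem _ hx₀X, ?_⟩
    rintro v ⟨x, hx, rfl⟩
    exact isMinOn_iff.mp hmin x hx
  -- existence of a minimizer of g over X
  have hglsc : ∀ x ∈ X, ∀ c < g x, ∀ᶠ z in 𝓝 x, c < g z := by
    intro x _ c hc
    obtain ⟨v, hv, hcv⟩ := exists_lt_of_lt_csSup (hne1 x) hc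
    obtain ⟨y, hyY, rfl⟩ := hv
    have hmem : {z | c < f z y} ∈ 𝓝 x :=
      (isOpen_lt continuous_const (contx y)).mem_nhds hcv
    filter_upwards [hmem] with z hz
    exact lt_of_lt_of_le hz (le_csSup (hbddA z) (Set.mem_image_of_mem _ hyY))
  obtain ⟨x₀, hx₀X, hx₀min⟩ := mm_exists_min hXcp hXne hglsc
  -- existence of a maximizer of h over Y
  have hhusc : ∀ y ∈ Y, ∀ c < -h y, ∀ᶠ z in 𝓝 y, c < -h z := by
    intro y _ c hc
    have : h y < -c := by linarith
    obtain ⟨v, hv, hvc⟩ := exists_lt_of_csInf_lt (hne2 y) this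
    obtain ⟨x, hxX, rfl⟩ := hv
    have hmem : {z | f x z < -c} ∈ 𝓝 y :=
      (isOpen_lt (conty x) continuous_const).mem_nhds hvc
    filter_upwards [hmem] with z hz
    have : h z ≤ f x z := csInf_le (hbddB z) (Set.mem_image_of_mem _ hxX)
    linarith
  obtain ⟨y₀, hy₀Y, hy₀min⟩ := mm_exists_min hYcp hYne hhusc
  have hy₀max : ∀ y ∈ Y, h y ≤ h y₀ := fun y hy => by linarith [hy₀min y hy]
  have part3 : IsLeast ((fun x => g x) '' X) (g x₀) := by
    refine ⟨Set.mem_image_of_mem _ hx₀X, ?_⟩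
    rintro v ⟨x, hx, rfl⟩
    exact hx₀min x hx
  have part4 : IsGreatest ((fun y => h y) '' Y) (h y₀) := by
    refine ⟨Set.mem_image_of_mem _ hy₀Y, ?_⟩
    rintro v ⟨y, hy, rfl⟩
    exact hy₀max y hy
  -- minimax equality
  have hle : h y₀ ≤ g x₀ :=
    le_trans (csInf_le (hbddB y₀) (Set.mem_image_of_mem _ hx₀X))
      (le_csSup (hbddA x₀) (Set.mem_image_of_mem _ hy₀Y))
  have hge : g x₀ ≤ h y₀ := by
    by_contra hlt
    push_neg at hlt
    obtain ⟨c, hc1, hc2⟩ := exists_between hlt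
    have hcov : X ⊆ ⋃ y : Y, {x | c < f x (y : EuclideanSpace ℝ (Fin n))} := by
      intro x hx
      have hgx : c < g x := lt_of_lt_of_le hc2 (hx₀min x hx)
      obtain ⟨v, hv, hcv⟩ := exists_lt_of_lt_csSup (hne1 x) hgx
      obtain ⟨y, hyY, rfl⟩ := hv
      exact Set.mem_iUnion.mpr ⟨⟨y, hyY⟩, hcv⟩
    obtain ⟨s, hs⟩ := hXcp.elim_finite_subcover
      (fun y : Y => {x | c < f x (y : EuclideanSpace ℝ (Fin n))})
      (fun y => isOpen_lt continuous_const (contx y)) hcov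
    set l : List (EuclideanSpace ℝ (Fin n)) := s.toList.map Subtype.val with hl_def
    have hlY : ∀ y ∈ l, y ∈ Y := by
      intro y hy
      rw [hl_def, List.mem_map] at hy
      obtain ⟨a, -, rfl⟩ := hy
      exact a.2
    have hx_l : ∀ x ∈ X, ∃ y ∈ l, c < f x y := by
      intro x hx
      obtain ⟨y, hys, hxy⟩ := Set.mem_iUnion₂.mp (hs hx)
      exact ⟨y, List.mem_map.mpr ⟨y, Finset.mem_toList.mpr hys, rfl⟩, hxy⟩
    obtain ⟨y, hyY, hy⟩ := mm_list hYne hYcv hf hfx hfy l hlY X (subset_refl X) hXcp hXcv hx_l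
    have h1 : c ≤ h y := le_csInf (hne2 y) (by rintro v ⟨x, hx, rfl⟩; exact (hy x hx).le)
    have h2 : c ≤ h y₀ := le_trans h1 (hy₀max y hyY)
    linarith
  have heq : g x₀ = h y₀ := le_antisymm hge hle
  exact ⟨part1, part2, ⟨x₀, hx₀X, part3⟩, ⟨y₀, hy₀Y, part4⟩, by
    rw [show sInf ((fun x => sSup ((f x) '' Y)) '' X) = g x₀ from part3.csInf_eq,
      show sSup ((fun y => sInf ((fun x => f x y) '' X)) '' Y) = h y₀ from part4.csSup_eq]
    exact heq⟩
end

section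
/- Let X ⊆ ℝ^m and Y ⊆ ℝ^n be nonempty, compact, convex sets, and let f : ℝ^m × ℝ^n → ℝ be continuous, convex in its first argument on X for each fixed y ∈ Y and concave in its second argument on Y for each fixed x ∈ X. Let T ≥ 1 and let x^1,…,x^T ∈ X and y^1,…,y^T ∈ Y be arbitrary sequences. Define the averages x̄ := (1/T)∑_{t=1}^T x^t and ȳ := (1/T)∑_{t=1}^T y^t, and the regrets r₁(T) := ∑_{t=1}^T f(x^t,y^t) − min_{x∈X} ∑_{t=1}^T f(x,y^t) and r₂(T) := max_{y∈Y} ∑_{t=1}^T f(x^t,y) − ∑_{t=1}^T f(x^t,y^t). Then the duality gap satisfies 0 ≤ max_{y∈Y} f(x̄,y) − min_{x∈X} f(x,ȳ) ≤ (r₁(T)+r₂(T))/T. -/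
/-- The duality gap of the average iterates is bounded by the time-averaged sum
of the two players' regrets. -/
theorem duality_gap_le_avg_sum_regrets
    {m n : ℕ}
    (X : Set (EuclideanSpace ℝ (Fin m))) (Y : Set (EuclideanSpace ℝ (Fin n)))
    (hXne : X.Nonempty) (hXcp : IsCompact X) (hXcv : Convex ℝ X)
    (hYne : Y.Nonempty) (hYcp : IsCompact Y) (hYcv : Convex ℝ Y)
    (f : EuclideanSpace ℝ (Fin m) → EuclideanSpace ℝ (Fin n) → ℝ)
    (hf : Continuous fun p : EuclideanSpace ℝ (Fin m) × EuclideanSpace ℝ (Fin n) => f p.1 p.2)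
    (hfx : ∀ y ∈ Y, ConvexOn ℝ X fun x => f x y)
    (hfy : ∀ x ∈ X, ConcaveOn ℝ Y fun y => f x y)
    (T : ℕ) (hT : 1 ≤ T)
    (x : Fin T → EuclideanSpace ℝ (Fin m)) (y : Fin T → EuclideanSpace ℝ (Fin n))
    (hx : ∀ t, x t ∈ X) (hy : ∀ t, y t ∈ Y)
    (xbar : EuclideanSpace ℝ (Fin m)) (hxbar : xbar = (T : ℝ)⁻¹ • ∑ t, x t)
    (ybar : EuclideanSpace ℝ (Fin n)) (hybar : ybar = (T : ℝ)⁻¹ • ∑ t, y t)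
    (r₁ r₂ : ℝ)
    (hr₁ : r₁ = ∑ t, f (x t) (y t) - sInf ((fun x' => ∑ t, f x' (y t)) '' X))
    (hr₂ : r₂ = sSup ((fun y' => ∑ t, f (x t) y') '' Y) - ∑ t, f (x t) (y t)) :
    0 ≤ sSup ((f xbar) '' Y) - sInf ((fun x' => f x' ybar) '' X) ∧
    sSup ((f xbar) '' Y) - sInf ((fun x' => f x' ybar) '' X) ≤ (r₁ + r₂) / T := by
  have hT0 : (T : ℝ) ≠ 0 := by positivity
  have hTpos : (0:ℝ) < T := by positivity
  have hwsum : ∑ _t : Fin T, (T : ℝ)⁻¹ = 1 := by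
    simp [Finset.sum_const, hT0]
  have hxbar' : xbar = ∑ t, (T : ℝ)⁻¹ • x t := by
    rw [hxbar, Finset.smul_sum]
  have hybar' : ybar = ∑ t, (T : ℝ)⁻¹ • y t := by
    rw [hybar, Finset.smul_sum]
  have hxbarX : xbar ∈ X := by
    rw [hxbar']
    exact hXcv.sum_mem (fun _ _ => by positivity) hwsum (fun t _ => hx t)
  have hybarY : ybar ∈ Y := by
    rw [hybar']
    exact hYcv.sum_mem (fun _ _ => by positivity) hwsum (fun t _ => hy t)
  -- boundedness facts
  have hcontY : ∀ x', ContinuousOn (f x') Y := fun x' =>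
    (hf.comp (Continuous.prodMk_right x')).continuousOn
  have hcontX : ∀ y', ContinuousOn (fun x' => f x' y') X := fun y' =>
    (hf.comp (Continuous.prodMk_left y')).continuousOn
  have bddA : BddAbove ((f xbar) '' Y) :=
    (hYcp.image_of_continuousOn (hcontY xbar)).bddAbove
  have bddB : BddBelow ((fun x' => f x' ybar) '' X) :=
    (hXcp.image_of_continuousOn (hcontX ybar)).bddBelow
  have bddS : BddAbove ((fun y' => ∑ t, f (x t) y') '' Y) := by
    refine (hYcp.image_of_continuousOn ?_).bddAbove
    exact continuousOn_finset_sum _ fun t _ => hcontY (x t)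
  have bddI : BddBelow ((fun x' => ∑ t, f x' (y t)) '' X) := by
    refine (hXcp.image_of_continuousOn ?_).bddBelow
    exact continuousOn_finset_sum _ fun t _ => hcontX (y t)
  have hAne : ((f xbar) '' Y).Nonempty := hYne.image _
  have hBne : ((fun x' => f x' ybar) '' X).Nonempty := hXne.image _
  constructor
  · have h1 : f xbar ybar ≤ sSup ((f xbar) '' Y) :=
      le_csSup bddA ⟨ybar, hybarY, rfl⟩
    have h2 : sInf ((fun x' => f x' ybar) '' X) ≤ f xbar ybar :=
      csInf_le bddB ⟨xbar, hxbarX, rfl⟩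
    linarith
  · have hsup : sSup ((f xbar) '' Y) ≤ (T : ℝ)⁻¹ * sSup ((fun y' => ∑ t, f (x t) y') '' Y) := by
      refine csSup_le hAne ?_
      rintro _ ⟨y', hy', rfl⟩
      have jensen : f xbar y' ≤ ∑ t, (T : ℝ)⁻¹ * f (x t) y' := by
        rw [hxbar']
        exact (hfx y' hy').map_sum_le (fun _ _ => by positivity) hwsum (fun t _ => hx t)
      have hle : ∑ t, f (x t) y' ≤ sSup ((fun y' => ∑ t, f (x t) y') '' Y) :=
        le_csSup bddS ⟨y', hy', rfl⟩
      calc f xbar y' ≤ ∑ t, (T : ℝ)⁻¹ * f (x t) y' := jensen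
        _ = (T : ℝ)⁻¹ * ∑ t, f (x t) y' := by rw [Finset.mul_sum]
        _ ≤ (T : ℝ)⁻¹ * sSup ((fun y' => ∑ t, f (x t) y') '' Y) := by
            apply mul_le_mul_of_nonneg_left hle; positivity
    have hinf : (T : ℝ)⁻¹ * sInf ((fun x' => ∑ t, f x' (y t)) '' X) ≤
        sInf ((fun x' => f x' ybar) '' X) := by
      refine le_csInf hBne ?_
      rintro _ ⟨x', hx', rfl⟩
      have jensen : ∑ t, (T : ℝ)⁻¹ * f x' (y t) ≤ f x' ybar := by
        rw [hybar']
        exact (hfy x' hx').le_map_sum (fun _ _ => by positivity) hwsum (fun t _ => hy t)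
      have hle : sInf ((fun x' => ∑ t, f x' (y t)) '' X) ≤ ∑ t, f x' (y t) :=
        csInf_le bddI ⟨x', hx', rfl⟩
      calc (T : ℝ)⁻¹ * sInf ((fun x' => ∑ t, f x' (y t)) '' X)
          ≤ (T : ℝ)⁻¹ * ∑ t, f x' (y t) := by
            apply mul_le_mul_of_nonneg_left hle; positivity
        _ = ∑ t, (T : ℝ)⁻¹ * f x' (y t) := by rw [Finset.mul_sum]
        _ ≤ f x' ybar := jensen
    rw [hr₁, hr₂, div_eq_inv_mul]
    have := sub_le_sub hsup hinf
    calc sSup ((f xbar) '' Y) - sInf ((fun x' => f x' ybar) '' X)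
        ≤ (T : ℝ)⁻¹ * sSup ((fun y' => ∑ t, f (x t) y') '' Y) -
          (T : ℝ)⁻¹ * sInf ((fun x' => ∑ t, f x' (y t)) '' X) := this
      _ = (T : ℝ)⁻¹ * (∑ t, f (x t) (y t) - sInf ((fun x' => ∑ t, f x' (y t)) '' X) +
          (sSup ((fun y' => ∑ t, f (x t) y') '' Y) - ∑ t, f (x t) (y t))) := by ring
end

section
/- Let X ⊆ ℝ^m and Y ⊆ ℝ^n be nonempty, compact, convex sets, and let f : ℝ^m × ℝ^n → ℝ be continuous, convex in its first argument on X for each fixed y ∈ Y and concave in its second argument on Y for each fixed x ∈ X. Let T ≥ 1, let x^1,…,x^T ∈ X and y^1,…,y^T ∈ Y be arbitrary sequences, and define x̄ := (1/T)∑_{t=1}^T x^t, ȳ := (1/T)∑_{t=1}^T y^t, r₁(T) := ∑_{t=1}^T f(x^t,y^t) − min_{x∈X} ∑_{t=1}^T f(x,y^t), r₂(T) := max_{y∈Y} ∑_{t=1}^T f(x^t,y) − ∑_{t=1}^T f(x^t,y^t), and v* := min_{x∈X} max_{y∈Y} f(x,y). Then the suboptimality gaps satisfy 0 ≤ max_{y∈Y}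 f(x̄,y) − v* ≤ (r₁(T)+r₂(T))/T and 0 ≤ v* − min_{x∈X} f(x,ȳ) ≤ (r₁(T)+r₂(T))/T. -/
/-- The suboptimality gaps of the average iterates for the dual min and max problems
are bounded by the time-averaged sum of the two players' regrets. -/
theorem suboptimality_gaps_le_avg_sum_regrets
    {m n : ℕ}
    (X : Set (EuclideanSpace ℝ (Fin m))) (Y : Set (EuclideanSpace ℝ (Fin n)))
    (hXne : X.Nonempty) (hXcp : IsCompact X) (hXcv : Convex ℝ X)
    (hYne : Y.Nonempty) (hYcp : IsCompact Y) (hYcv : Convex ℝ Y)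
    (f : EuclideanSpace ℝ (Fin m) → EuclideanSpace ℝ (Fin n) → ℝ)
    (hf : Continuous fun p : EuclideanSpace ℝ (Fin m) × EuclideanSpace ℝ (Fin n) => f p.1 p.2)
    (hfx : ∀ y ∈ Y, ConvexOn ℝ X fun x => f x y)
    (hfy : ∀ x ∈ X, ConcaveOn ℝ Y fun y => f x y)
    (T : ℕ) (hT : 1 ≤ T)
    (x : Fin T → EuclideanSpace ℝ (Fin m)) (y : Fin T → EuclideanSpace ℝ (Fin n))
    (hx : ∀ t, x t ∈ X) (hy : ∀ t, y t ∈ Y)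
    (xbar : EuclideanSpace ℝ (Fin m)) (hxbar : xbar = (T : ℝ)⁻¹ • ∑ t, x t)
    (ybar : EuclideanSpace ℝ (Fin n)) (hybar : ybar = (T : ℝ)⁻¹ • ∑ t, y t)
    (r₁ r₂ : ℝ)
    (hr₁ : r₁ = ∑ t, f (x t) (y t) - sInf ((fun x' => ∑ t, f x' (y t)) '' X))
    (hr₂ : r₂ = sSup ((fun y' => ∑ t, f (x t) y') '' Y) - ∑ t, f (x t) (y t))
    (vstar : ℝ) (hvstar : vstar = sInf ((fun x' => sSup ((f x') '' Y)) '' X)) :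
    (0 ≤ sSup ((f xbar) '' Y) - vstar ∧
      sSup ((f xbar) '' Y) - vstar ≤ (r₁ + r₂) / T) ∧
    (0 ≤ vstar - sInf ((fun x' => f x' ybar) '' X) ∧
      vstar - sInf ((fun x' => f x' ybar) '' X) ≤ (r₁ + r₂) / T) := by
  have hT0 : (0:ℝ) < T := by exact_mod_cast hT
  have hTne : (T:ℝ) ≠ 0 := ne_of_gt hT0
  have hTinv : (0:ℝ) ≤ (T:ℝ)⁻¹ := by positivity
  obtain ⟨y₀, hy₀⟩ := hYne
  obtain ⟨x₀, hx₀⟩ := hXne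
  have hcx : ∀ x', Continuous (f x') := fun x' =>
    hf.comp (continuous_const.prodMk continuous_id)
  have hcy : ∀ y', Continuous (fun x' => f x' y') := fun y' =>
    hf.comp (continuous_id.prodMk continuous_const)
  -- weights
  have hwsum : ∑ _t : Fin T, (T:ℝ)⁻¹ = 1 := by
    rw [Finset.sum_const, Finset.card_univ, Fintype.card_fin, nsmul_eq_mul]
    field_simp
  have hxbar' : xbar = ∑ t, (T:ℝ)⁻¹ • x t := by rw [hxbar, Finset.smul_sum]
  have hybar' : ybar = ∑ t, (T:ℝ)⁻¹ • y t := by rw [hybar, Finset.smul_sum]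
  have hxbarX : xbar ∈ X := by
    rw [hxbar']
    exact hXcv.sum_mem (fun i _ => hTinv) hwsum (fun i _ => hx i)
  have hybarY : ybar ∈ Y := by
    rw [hybar']
    exact hYcv.sum_mem (fun i _ => hTinv) hwsum (fun i _ => hy i)
  -- Jensen inequalities
  have hJx : ∀ y' ∈ Y, f xbar y' ≤ (T:ℝ)⁻¹ * ∑ t, f (x t) y' := by
    intro y' hy'
    have h := (hfx y' hy').map_sum_le (fun i _ => hTinv) hwsum (fun i _ => hx i)
    rw [hxbar']
    calc f (∑ t, (T:ℝ)⁻¹ • x t) y' ≤ ∑ t, (T:ℝ)⁻¹ * f (x t) y' := h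
      _ = (T:ℝ)⁻¹ * ∑ t, f (x t) y' := (Finset.mul_sum _ _ _).symm
  have hJy : ∀ x' ∈ X, (T:ℝ)⁻¹ * ∑ t, f x' (y t) ≤ f x' ybar := by
    intro x' hx'
    have h := (hfy x' hx').le_map_sum (fun i _ => hTinv) hwsum (fun i _ => hy i)
    rw [hybar']
    calc (T:ℝ)⁻¹ * ∑ t, f x' (y t) = ∑ t, (T:ℝ)⁻¹ * f x' (y t) := Finset.mul_sum _ _ _
      _ ≤ f x' (∑ t, (T:ℝ)⁻¹ • y t) := h
  -- compactness / boundedness facts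
  have hYim : ∀ x', IsCompact (f x' '' Y) := fun x' => hYcp.image (hcx x')
  have hYimne : ∀ x', (f x' '' Y).Nonempty := fun x' => ⟨f x' y₀, y₀, hy₀, rfl⟩
  have hS1cp : IsCompact ((fun x' => ∑ t, f x' (y t)) '' X) :=
    hXcp.image (continuous_finset_sum _ fun t _ => hcy (y t))
  have hS2cp : IsCompact ((fun y' => ∑ t, f (x t) y') '' Y) :=
    hYcp.image (continuous_finset_sum _ fun t _ => hcx (x t))
  have hS1ne : ((fun x' => ∑ t, f x' (y t)) '' X).Nonempty := ⟨_, x₀, hx₀, rfl⟩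
  have hS2ne : ((fun y' => ∑ t, f (x t) y') '' Y).Nonempty := ⟨_, y₀, hy₀, rfl⟩
  have hHcp : IsCompact ((fun x' => f x' ybar) '' X) := hXcp.image (hcy ybar)
  have hHne : ((fun x' => f x' ybar) '' X).Nonempty := ⟨_, x₀, hx₀, rfl⟩
  have hGne : ((fun x' => sSup ((f x') '' Y)) '' X).Nonempty := ⟨_, x₀, hx₀, rfl⟩
  have hY0cp : IsCompact ((fun x' => f x' y₀) '' X) := hXcp.image (hcy y₀)
  -- g '' X is bounded below
  have hGbdd : BddBelow ((fun x' => sSup ((f x') '' Y)) '' X) := by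
    refine ⟨sInf ((fun x' => f x' y₀) '' X), ?_⟩
    rintro b ⟨x', hx', rfl⟩
    calc sInf ((fun x'' => f x'' y₀) '' X) ≤ f x' y₀ :=
          csInf_le hY0cp.bddBelow ⟨x', hx', rfl⟩
      _ ≤ sSup (f x' '' Y) := le_csSup (hYim x').bddAbove ⟨y₀, hy₀, rfl⟩
  -- (A) vstar ≤ sSup (f xbar '' Y)
  have hA : vstar ≤ sSup (f xbar '' Y) := by
    rw [hvstar]; exact csInf_le hGbdd ⟨xbar, hxbarX, rfl⟩
  -- (B) sInf (h '' X) ≤ vstar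
  have hB : sInf ((fun x' => f x' ybar) '' X) ≤ vstar := by
    rw [hvstar]
    refine le_csInf hGne ?_
    rintro b ⟨x', hx', rfl⟩
    calc sInf ((fun x'' => f x'' ybar) '' X) ≤ f x' ybar :=
          csInf_le hHcp.bddBelow ⟨x', hx', rfl⟩
      _ ≤ sSup (f x' '' Y) := le_csSup (hYim x').bddAbove ⟨ybar, hybarY, rfl⟩
  -- (C)
  have hC : sSup (f xbar '' Y) ≤ (T:ℝ)⁻¹ * sSup ((fun y' => ∑ t, f (x t) y') '' Y) := by
    refine csSup_le (hYimne xbar) ?_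
    rintro b ⟨y', hy', rfl⟩
    exact (hJx y' hy').trans (mul_le_mul_of_nonneg_left
      (le_csSup hS2cp.bddAbove ⟨y', hy', rfl⟩) hTinv)
  -- (D)
  have hD : (T:ℝ)⁻¹ * sInf ((fun x' => ∑ t, f x' (y t)) '' X)
      ≤ sInf ((fun x' => f x' ybar) '' X) := by
    refine le_csInf hHne ?_
    rintro b ⟨x', hx', rfl⟩
    exact (mul_le_mul_of_nonneg_left
      (csInf_le hS1cp.bddBelow ⟨x', hx', rfl⟩) hTinv).trans (hJy x' hx')
  have hkey : sSup (f xbar '' Y) - sInf ((fun x' => f x' ybar) '' X) ≤ (r₁ + r₂) / T := by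
    rw [hr₁, hr₂]
    rw [div_eq_inv_mul]
    nlinarith [hC, hD]
  constructor <;> constructor <;> linarith
end

section
/- Let D ⊆ ℝ^d be a nonempty compact convex set, let N : ℝ^d → ℝ be a norm (i.e., N(u+v) ≤ N(u)+N(v), N(c·u) = |c|·N(u) for all c ∈ ℝ, and N(u) = 0 implies u = 0), and let N*(v) := sup{⟨v,u⟩ : u ∈ ℝ^d, N(u) ≤ 1} be its dual norm, where ⟨·,·⟩ is the standard inner product. Let Φ : ℝ^d → ℝ be continuous and 1-strongly convex with respect to N on D, meaning Φ(λx+(1−λ)y) ≤ λΦ(x) + (1−λ)Φ(y) − (1/2)λ(1−λ)N(x−y)² for all x,y ∈ D and λ ∈ [0,1]. Let η > 0, let f^1,…,f^T : ℝ^d → ℝ be concave and differentiable, and define iterates x^1,…,x^T ∈ D and vectors m^t := ∇f^t(x^t) for 1 ≤ t ≤ T, with the conventions m^0 := 0 and x^0 := x^1, by requiring that for each t ∈ {0,1,…,T−1}, x^{t+1} is a maximizer over D of the map x ↦ η⟨∑_{k=1}^t m^k + m^t, x⟩ − Φ(x). Then for every x ∈ D: ∑_{t=1}^T ( f^t(x)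 − f^t(x^t) ) ≤ R/η + η ∑_{t=1}^T N*(m^t − m^{t−1})² − (1/(4η)) ∑_{t=1}^T N(x^t − x^{t−1})², where R := sup_{u∈D} Φ(u) − inf_{u∈D} Φ(u). -/
/-- The dual norm of `N` with respect to the standard inner ℝ product on `ℝ^d`. -/
noncomputable def dualNorm {d : ℕ} (N : EuclideanSpace ℝ (Fin d) → ℝ)
    (v : EuclideanSpace ℝ (Fin d)) : ℝ :=
  sSup {r : ℝ | ∃ u : EuclideanSpace ℝ (Fin d), N u ≤ 1 ∧ r = (inner ℝ v u : ℝ)}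



open Set Finset

section aux

variable {d : ℕ} (N : EuclideanSpace ℝ (Fin d) → ℝ)

lemma myN_zero (hNsmul : ∀ (c : ℝ) u, N (c • u) = |c| * N u) : N 0 = 0 := by
  have h := hNsmul 0 0
  rw [zero_smul] at h
  simpa using h

lemma myN_neg (hNsmul : ∀ (c : ℝ) u, N (c • u) = |c| * N u) (u : EuclideanSpace ℝ (Fin d)) :
    N (-u) = N u := by
  have h := hNsmul (-1) u
  rw [neg_one_smul] at h
  simpa using h

lemma myN_nonneg (hNadd : ∀ u v, N (u + v) ≤ N u + N v)
    (hNsmul : ∀ (c : ℝ) u, N (c • u) = |c| * N u) (u : EuclideanSpace ℝ (Fin d)) :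
    0 ≤ N u := by
  have h := hNadd u (-u)
  rw [add_neg_cancel, myN_zero N hNsmul, myN_neg N hNsmul] at h
  linarith

lemma myN_sum_le (hNadd : ∀ u v, N (u + v) ≤ N u + N v)
    (hNsmul : ∀ (c : ℝ) u, N (c • u) = |c| * N u)
    {ι : Type*} (s : Finset ι) (g : ι → EuclideanSpace ℝ (Fin d)) :
    N (∑ i ∈ s, g i) ≤ ∑ i ∈ s, N (g i) := by
  classical
  induction s using Finset.induction with
  | empty => simp [myN_zero N hNsmul]
  | insert a s h ih =>
    rw [Finset.sum_insert h, Finset.sum_insert h]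
    exact le_trans (hNadd _ _) (by linarith)

lemma myN_le_const (hNadd : ∀ u v, N (u + v) ≤ N u + N v)
    (hNsmul : ∀ (c : ℝ) u, N (c • u) = |c| * N u) :
    ∃ C : ℝ, 0 ≤ C ∧ ∀ u, N u ≤ C * ‖u‖ := by
  classical
  set b := EuclideanSpace.basisFun (Fin d) ℝ with hb
  refine ⟨∑ i : Fin d, N (b i), Finset.sum_nonneg fun i _ => myN_nonneg N hNadd hNsmul _, ?_⟩
  intro u
  have hrepr : ∑ i : Fin d, u i • b i = u := by
    have := b.sum_repr u
    simpa [hb, EuclideanSpace.basisFun_repr] using this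
  calc N u = N (∑ i : Fin d, u i • b i) := by rw [hrepr]
    _ ≤ ∑ i : Fin d, N (u i • b i) := myN_sum_le N hNadd hNsmul _ _
    _ = ∑ i : Fin d, |u i| * N (b i) := by simp [hNsmul]
    _ ≤ ∑ i : Fin d, ‖u‖ * N (b i) := by
        refine Finset.sum_le_sum fun i _ => ?_
        refine mul_le_mul_of_nonneg_right ?_ (myN_nonneg N hNadd hNsmul _)
        have h1 : (inner ℝ (EuclideanSpace.single i (1:ℝ)) u : ℝ) = u i := by
          rw [EuclideanSpace.inner_single_left]; simp
        have h2 := abs_real_inner_le_norm (EuclideanSpace.single i (1:ℝ)) u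
        rw [h1, EuclideanSpace.norm_single] at h2
        simpa using h2
    _ = (∑ i : Fin d, N (b i)) * ‖u‖ := by rw [← Finset.mul_sum, mul_comm]

lemma myN_continuous (hNadd : ∀ u v, N (u + v) ≤ N u + N v)
    (hNsmul : ∀ (c : ℝ) u, N (c • u) = |c| * N u) : Continuous N := by
  obtain ⟨C, hC0, hC⟩ := myN_le_const N hNadd hNsmul
  have key : ∀ u v, N u - N v ≤ N (u - v) := by
    intro u v
    have h := hNadd (u - v) v
    rw [sub_add_cancel] at h
    linarith
  have lip : LipschitzWith C.toNNReal N := by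
    refine LipschitzWith.of_dist_le_mul fun u v => ?_
    rw [Real.dist_eq, dist_eq_norm, Real.coe_toNNReal C hC0]
    have h1 := key u v
    have h2 := key v u
    have h3 : N (v - u) = N (u - v) := by
      rw [← myN_neg N hNsmul (u - v), neg_sub]
    rw [abs_sub_le_iff]
    exact ⟨le_trans h1 (hC _), le_trans (h3 ▸ h2) (hC _)⟩
  exact lip.continuous

lemma myN_lower (hNadd : ∀ u v, N (u + v) ≤ N u + N v)
    (hNsmul : ∀ (c : ℝ) u, N (c • u) = |c| * N u)
    (hNdef : ∀ u, N u = 0 → u = 0) :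
    ∃ c : ℝ, 0 < c ∧ ∀ u, c * ‖u‖ ≤ N u := by
  by_cases hd : ∃ u : EuclideanSpace ℝ (Fin d), u ≠ 0
  · obtain ⟨u0, hu0⟩ := hd
    have hsne : (Metric.sphere (0 : EuclideanSpace ℝ (Fin d)) 1).Nonempty :=
      ⟨‖u0‖⁻¹ • u0, by simp [norm_smul, norm_ne_zero_iff.2 hu0,
        inv_mul_cancel₀ (norm_ne_zero_iff.2 hu0)]⟩
    obtain ⟨w, hw, hwmin⟩ := (isCompact_sphere (0 : EuclideanSpace ℝ (Fin d)) 1).exists_isMinOn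
      hsne ((myN_continuous N hNadd hNsmul).continuousOn)
    have hw1 : ‖w‖ = 1 := by simpa using hw
    have hwne : w ≠ 0 := by intro h; rw [h] at hw1; simp at hw1
    have hc : 0 < N w := by
      rcases lt_or_eq_of_le (myN_nonneg N hNadd hNsmul w) with h | h
      · exact h
      · exact absurd (hNdef w h.symm) hwne
    refine ⟨N w, hc, fun u => ?_⟩
    by_cases hu : u = 0
    · simp [hu, myN_zero N hNsmul]
    · have hnu : (0:ℝ) < ‖u‖ := norm_pos_iff.2 hu
      have hmem : ‖u‖⁻¹ • u ∈ Metric.sphere (0 : EuclideanSpace ℝ (Fin d)) 1 := by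
        simp [norm_smul, inv_mul_cancel₀ (ne_of_gt hnu), abs_of_pos (inv_pos.2 hnu)]
      have hthis : N w ≤ N (‖u‖⁻¹ • u) := hwmin hmem
      have h2 : N (‖u‖⁻¹ • u) = ‖u‖⁻¹ * N u := by
        rw [hNsmul]; rw [abs_of_pos (inv_pos.2 hnu)]
      rw [h2] at hthis
      calc N w * ‖u‖ ≤ (‖u‖⁻¹ * N u) * ‖u‖ := by
            exact mul_le_mul_of_nonneg_right hthis (le_of_lt hnu)
        _ = N u := by field_simp
  · push_neg at hd
    exact ⟨1, one_pos, fun u => by simp [hd u, myN_zero N hNsmul]⟩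

end aux

section dual

variable {d : ℕ}

lemma dual_bddAbove (N : EuclideanSpace ℝ (Fin d) → ℝ)
    (hNadd : ∀ u v, N (u + v) ≤ N u + N v)
    (hNsmul : ∀ (c : ℝ) u, N (c • u) = |c| * N u)
    (hNdef : ∀ u, N u = 0 → u = 0)
    (v : EuclideanSpace ℝ (Fin d)) :
    BddAbove {r : ℝ | ∃ u : EuclideanSpace ℝ (Fin d), N u ≤ 1 ∧ r = (inner ℝ v u : ℝ)} := by
  obtain ⟨c, hc, hlow⟩ := myN_lower N hNadd hNsmul hNdef
  refine ⟨‖v‖ * c⁻¹, fun r hr => ?_⟩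
  obtain ⟨u, hu1, rfl⟩ := hr
  have h1 : (inner ℝ v u : ℝ) ≤ ‖v‖ * ‖u‖ := real_inner_le_norm v u
  have h2 : ‖u‖ ≤ c⁻¹ := by
    have h3 := hlow u
    rw [← le_div_iff₀' hc] at h3
    calc ‖u‖ ≤ N u / c := h3
      _ ≤ 1 / c := by gcongr
      _ = c⁻¹ := one_div c
  calc (inner ℝ v u : ℝ) ≤ ‖v‖ * ‖u‖ := h1
    _ ≤ ‖v‖ * c⁻¹ := mul_le_mul_of_nonneg_left h2 (norm_nonneg v)

lemma dualNorm_nonneg (N : EuclideanSpace ℝ (Fin d) → ℝ)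
    (hNadd : ∀ u v, N (u + v) ≤ N u + N v)
    (hNsmul : ∀ (c : ℝ) u, N (c • u) = |c| * N u)
    (hNdef : ∀ u, N u = 0 → u = 0)
    (v : EuclideanSpace ℝ (Fin d)) : 0 ≤ dualNorm N v :=
  le_csSup (dual_bddAbove N hNadd hNsmul hNdef v)
    ⟨0, by rw [myN_zero N hNsmul]; norm_num, by simp⟩

lemma inner_le_dualNorm (N : EuclideanSpace ℝ (Fin d) → ℝ)
    (hNadd : ∀ u v, N (u + v) ≤ N u + N v)
    (hNsmul : ∀ (c : ℝ) u, N (c • u) = |c| * N u)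
    (hNdef : ∀ u, N u = 0 → u = 0)
    (v u : EuclideanSpace ℝ (Fin d)) :
    (inner ℝ v u : ℝ) ≤ dualNorm N v * N u := by
  by_cases hu : u = 0
  · rw [hu, myN_zero N hNsmul, mul_zero]
    simp
  · have hpos : 0 < N u := by
      rcases lt_or_eq_of_le (myN_nonneg N hNadd hNsmul u) with h | h
      · exact h
      · exact absurd (hNdef u h.symm) hu
    have hmem : (inner ℝ v ((N u)⁻¹ • u) : ℝ) ∈
        {r : ℝ | ∃ w : EuclideanSpace ℝ (Fin d), N w ≤ 1 ∧ r = (inner ℝ v w : ℝ)} := by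
      refine ⟨(N u)⁻¹ • u, ?_, rfl⟩
      rw [hNsmul, abs_of_pos (inv_pos.2 hpos), inv_mul_cancel₀ (ne_of_gt hpos)]
    have hle := le_csSup (dual_bddAbove N hNadd hNsmul hNdef v) hmem
    rw [real_inner_smul_right] at hle
    have h5 := mul_le_mul_of_nonneg_right hle (le_of_lt hpos)
    calc (inner ℝ v u : ℝ) = ((N u)⁻¹ * (inner ℝ v u : ℝ)) * N u := by field_simp
      _ ≤ dualNorm N v * N u := h5

end dual


open Filter Topology

section growth

variable {d : ℕ}

lemma quad_growth (D : Set (EuclideanSpace ℝ (Fin d))) (hDcv : Convex ℝ D)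
    (N : EuclideanSpace ℝ (Fin d) → ℝ) (Φ : EuclideanSpace ℝ (Fin d) → ℝ)
    (hΦsc : ∀ x ∈ D, ∀ y ∈ D, ∀ θ ∈ Set.Icc (0 : ℝ) 1,
      Φ (θ • x + (1 - θ) • y) ≤ θ * Φ x + (1 - θ) * Φ y - (1/2) * θ * (1 - θ) * (N (x - y))^2)
    (η : ℝ) (a : EuclideanSpace ℝ (Fin d)) (xstar : EuclideanSpace ℝ (Fin d)) (hxs : xstar ∈ D)
    (hmax : ∀ z ∈ D, η * (inner ℝ a z : ℝ) - Φ z ≤ η * (inner ℝ a xstar : ℝ) - Φ xstar) :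
    ∀ z ∈ D, (η * (inner ℝ a z : ℝ) - Φ z) + (1/2) * (N (z - xstar))^2 ≤
      η * (inner ℝ a xstar : ℝ) - Φ xstar := by
  intro z hz
  have key : ∀ θ ∈ Set.Ioo (0:ℝ) 1,
      (η * (inner ℝ a z : ℝ) - Φ z) + (1/2) * (1 - θ) * (N (z - xstar))^2 ≤
        η * (inner ℝ a xstar : ℝ) - Φ xstar := by
    intro θ hθ
    obtain ⟨hθ0, hθ1⟩ := hθ
    have hcomb : θ • z + (1 - θ) • xstar ∈ D :=
      hDcv hz hxs (le_of_lt hθ0) (by linarith) (by ring)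
    have hΦ := hΦsc z hz xstar hxs θ ⟨le_of_lt hθ0, le_of_lt hθ1⟩
    have hlin : (inner ℝ a (θ • z + (1 - θ) • xstar) : ℝ) =
        θ * (inner ℝ a z : ℝ) + (1 - θ) * (inner ℝ a xstar : ℝ) := by
      rw [inner_add_right, real_inner_smul_right, real_inner_smul_right]
    have hmaxc := hmax _ hcomb
    rw [hlin] at hmaxc
    have h2 : η * (θ * (inner ℝ a z : ℝ) + (1 - θ) * (inner ℝ a xstar : ℝ))
        - (θ * Φ z + (1 - θ) * Φ xstar - (1/2) * θ * (1 - θ) * (N (z - xstar))^2)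
        ≤ η * (inner ℝ a xstar : ℝ) - Φ xstar := le_trans (by linarith) hmaxc
    nlinarith [h2, hθ0, hθ1]
  have hcont : Tendsto (fun θ : ℝ =>
      (η * (inner ℝ a z : ℝ) - Φ z) + (1/2) * (1 - θ) * (N (z - xstar))^2)
      (nhdsWithin 0 (Set.Ioi 0))
      (nhds ((η * (inner ℝ a z : ℝ) - Φ z) + (1/2) * (1 - (0:ℝ)) * (N (z - xstar))^2)) := by
    apply Filter.Tendsto.mono_left _ nhdsWithin_le_nhds
    exact Continuous.tendsto (by continuity) 0
  have hev : ∀ᶠ θ in nhdsWithin (0:ℝ) (Set.Ioi 0),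
      (η * (inner ℝ a z : ℝ) - Φ z) + (1/2) * (1 - θ) * (N (z - xstar))^2 ≤
        η * (inner ℝ a xstar : ℝ) - Φ xstar :=
    Filter.eventually_of_mem (Ioo_mem_nhdsGT_of_mem ⟨le_refl (0:ℝ), one_pos⟩) key
  have hfin := le_of_tendsto hcont hev
  linarith

lemma concave_grad (g : EuclideanSpace ℝ (Fin d) → ℝ) (hc : ConcaveOn ℝ Set.univ g)
    (hd : Differentiable ℝ g) (p q : EuclideanSpace ℝ (Fin d)) :
    g q - g p ≤ (inner ℝ (gradient g p) (q - p) : ℝ) := by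
  set v := q - p with hv
  have hgrad : HasGradientAt g (gradient g p) p := (hd p).hasGradientAt
  have hfd : HasFDerivAt g (InnerProductSpace.toDual ℝ _ (gradient g p)) p := hgrad.hasFDerivAt
  have hline : HasDerivAt (fun θ : ℝ => p + θ • v) v 0 := by
    have h1 : HasDerivAt (fun θ : ℝ => θ • v) ((1:ℝ) • v) 0 := (hasDerivAt_id 0).smul_const v
    simpa using h1.const_add p
  have hfd' : HasFDerivAt g (InnerProductSpace.toDual ℝ _ (gradient g p))
      ((fun θ : ℝ => p + θ • v) 0) := by simpa using hfd
  have hcomp : HasDerivAt (fun θ : ℝ => g (p + θ • v))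
      ((InnerProductSpace.toDual ℝ _ (gradient g p)) v) 0 := by
    have h2 := hfd'.comp_hasDerivAt (0:ℝ) hline
    exact h2
  have hval : ((InnerProductSpace.toDual ℝ _ (gradient g p)) v) = (inner ℝ (gradient g p) v : ℝ) :=
    InnerProductSpace.toDual_apply_apply
  rw [hval] at hcomp
  set φ : ℝ → ℝ := fun θ => g (p + θ • v) with hφ
  have hslope : Tendsto (slope φ 0) (nhdsWithin 0 (Set.Ioi 0))
      (nhds (inner ℝ (gradient g p) v : ℝ)) := by
    refine Filter.Tendsto.mono_left (hasDerivAt_iff_tendsto_slope.1 hcomp) ?_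
    exact nhdsWithin_mono 0 (fun x hx => ne_of_gt hx)
  have hev : ∀ᶠ θ in nhdsWithin (0:ℝ) (Set.Ioi 0), g q - g p ≤ slope φ 0 θ := by
    refine Filter.eventually_of_mem (Ioo_mem_nhdsGT_of_mem ⟨le_refl (0:ℝ), one_pos⟩) ?_
    intro θ hθ
    obtain ⟨hθ0, hθ1⟩ := hθ
    have hcomb := hc.2 (Set.mem_univ p) (Set.mem_univ q)
      (show (0:ℝ) ≤ 1 - θ by linarith) (le_of_lt hθ0) (by ring)
    have heq : (1 - θ) • p + θ • q = p + θ • v := by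
      rw [hv]; module
    rw [heq] at hcomb
    rw [slope_def_field]
    have hφ0 : φ 0 = g p := by simp [hφ]
    have hφθ : (1 - θ) * g p + θ * g q ≤ φ θ := by simpa [hφ, smul_eq_mul] using hcomb
    rw [hφ0, sub_zero, le_div_iff₀ hθ0]
    nlinarith
  exact ge_of_tendsto hslope hev

end growth


lemma step_arith (η p1 p2 q1 q2 r1 r2 w u0 m1 P1 P2 P3 b1 a1 nd : ℝ)
    (hη : 0 < η) (hbnn : 0 ≤ b1) (hndnn : 0 ≤ nd)
    (e1 : q1 = p1 + r1) (e2 : q2 = p2 + r2) (e4 : q2 = w + m1)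
    (s2 : η * p1 - P1 + (1/2) * b1^2 ≤ η * p2 - P2)
    (s5 : η * q2 - P2 + (1/2) * b1^2 ≤ η * q1 - P1)
    (s6 : η * w - P2 + (1/2) * a1^2 ≤ η * u0 - P3)
    (hdual : r1 - r2 ≤ nd * b1) :
    η * q1 - P1 ≤ (η * u0 - P3)
      + (η * m1 + η^2 * nd^2 - (1/2) * a1^2 - (1/2) * b1^2) := by
  subst e1 e2
  have hb2 : b1^2 ≤ η * (r1 - r2) := by nlinarith [s2, s5]
  have hs4 : η * (r1 - r2) ≤ η^2 * nd^2 := by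
    nlinarith [hb2, mul_le_mul_of_nonneg_left hdual (le_of_lt hη),
      sq_nonneg (b1 - η * nd), hndnn, hbnn]
  have e4' : η * (p2 + r2) = η * w + η * m1 := by rw [e4]; ring
  nlinarith [s2, s6, hs4, e4']

set_option maxHeartbeats 1000000 in
/-- The RVU (regret bounded by variation in utilities) bound for Optimistic
Follow-The-Regularized-Leader with predictor equal to the previous payoff vector. -/
theorem oftrl_rvu_bound
    {d : ℕ} (D : Set (EuclideanSpace ℝ (Fin d)))
    (hDne : D.Nonempty) (hDcp : IsCompact D) (hDcv : Convex ℝ D)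
    (N : EuclideanSpace ℝ (Fin d) → ℝ)
    (hNadd : ∀ u v, N (u + v) ≤ N u + N v)
    (hNsmul : ∀ (c : ℝ) u, N (c • u) = |c| * N u)
    (hNdef : ∀ u, N u = 0 → u = 0)
    (Φ : EuclideanSpace ℝ (Fin d) → ℝ) (hΦcont : Continuous Φ)
    (hΦsc : ∀ x ∈ D, ∀ y ∈ D, ∀ θ ∈ Set.Icc (0 : ℝ) 1,
      Φ (θ • x + (1 - θ) • y) ≤ θ * Φ x + (1 - θ) * Φ y - (1/2) * θ * (1 - θ) * (N (x - y))^2)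
    (η : ℝ) (hη : 0 < η)
    (T : ℕ)
    (f : ℕ → EuclideanSpace ℝ (Fin d) → ℝ)
    (hfconc : ∀ t, 1 ≤ t → t ≤ T → ConcaveOn ℝ Set.univ (f t))
    (hfdiff : ∀ t, 1 ≤ t → t ≤ T → Differentiable ℝ (f t))
    (x mvec : ℕ → EuclideanSpace ℝ (Fin d))
    (hm0 : mvec 0 = 0)
    (hx0 : x 0 = x 1)
    (hm : ∀ t, 1 ≤ t → t ≤ T → mvec t = gradient (f t) (x t))
    (hupdate : ∀ t < T, x (t + 1) ∈ D ∧ ∀ z ∈ D,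
      η * (inner ℝ (∑ k ∈ Finset.Icc 1 t, mvec k + mvec t) z : ℝ) - Φ z ≤
        η * (inner ℝ (∑ k ∈ Finset.Icc 1 t, mvec k + mvec t) (x (t + 1)) : ℝ) - Φ (x (t + 1)))
    (R : ℝ) (hR : R = sSup (Φ '' D) - sInf (Φ '' D)) :
    ∀ xs ∈ D,
      ∑ t ∈ Finset.Icc 1 T, (f t xs - f t (x t)) ≤
        R / η + η * ∑ t ∈ Finset.Icc 1 T, (dualNorm N (mvec t - mvec (t - 1)))^2
          - (1 / (4 * η)) * ∑ t ∈ Finset.Icc 1 T, (N (x t - x (t - 1)))^2 := by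
  intro xs hxs
  have himg : IsCompact (Φ '' D) := hDcp.image hΦcont
  have hRnn : 0 ≤ R := by
    obtain ⟨a, ha⟩ := hDne
    have h1 : sInf (Φ '' D) ≤ Φ a := csInf_le himg.bddBelow ⟨a, ha, rfl⟩
    have h2 : Φ a ≤ sSup (Φ '' D) := le_csSup himg.bddAbove ⟨a, ha, rfl⟩
    rw [hR]; linarith
  rcases Nat.eq_zero_or_pos T with hT0 | hT1
  · subst hT0
    simp only [Finset.Icc_eq_empty_of_lt (by norm_num : (1:ℕ) > 0), Finset.sum_empty]
    have : 0 ≤ R / η := div_nonneg hRnn (le_of_lt hη)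
    linarith
  set M : ℕ → EuclideanSpace ℝ (Fin d) := fun t => ∑ k ∈ Finset.Icc 1 t, mvec k with hM
  have hM0 : M 0 = 0 := by rw [hM]; simp
  have hMsucc : ∀ n : ℕ, M (n + 1) = M n + mvec (n + 1) := by
    intro n
    rw [hM]
    exact Finset.sum_Icc_succ_top (by omega) mvec
  have hGcont : ∀ t : ℕ, Continuous (fun z : EuclideanSpace ℝ (Fin d) =>
      η * (inner ℝ (M t) z : ℝ) - Φ z) := by
    intro t
    exact (continuous_const.mul (continuous_const.inner continuous_id)).sub hΦcont
  have hy : ∀ t : ℕ, ∃ w, w ∈ D ∧ ∀ z ∈ D,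
      η * (inner ℝ (M t) z : ℝ) - Φ z ≤ η * (inner ℝ (M t) w : ℝ) - Φ w := by
    intro t
    obtain ⟨w, hwD, hwmax⟩ := hDcp.exists_isMaxOn hDne (hGcont t).continuousOn
    exact ⟨w, hwD, fun z hz => hwmax hz⟩
  choose y hyD hymax using hy
  have hNnn : ∀ u, 0 ≤ N u := myN_nonneg N hNadd hNsmul
  set A : ℕ → ℝ := fun t => N (x t - y (t - 1)) with hA
  set B : ℕ → ℝ := fun t => N (y t - x t) with hB
  set ND : ℕ → ℝ := fun t => dualNorm N (mvec t - mvec (t - 1)) with hND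
  have hNDnn : ∀ t, 0 ≤ ND t := fun t => dualNorm_nonneg N hNadd hNsmul hNdef _
  -- main telescoping claim
  have claim : ∀ n : ℕ, n ≤ T →
      η * (inner ℝ (M n) (y n) : ℝ) - Φ (y n) ≤
        η * (inner ℝ (M 0) (y 0) : ℝ) - Φ (y 0) +
          ∑ t ∈ Finset.Icc 1 n, (η * (inner ℝ (mvec t) (x t) : ℝ)
            + η^2 * (ND t)^2 - (1/2) * (A t)^2 - (1/2) * (B t)^2) := by
    intro n
    induction n with
    | zero => intro _; simp
    | succ n ih =>
      intro hn1
      have hnT : n < T := by omega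
      have ihn := ih (by omega)
      obtain ⟨hxD, hxmax⟩ := hupdate n hnT
      have hxmax' : ∀ z ∈ D, η * (inner ℝ (M n + mvec n) z : ℝ) - Φ z ≤
          η * (inner ℝ (M n + mvec n) (x (n + 1)) : ℝ) - Φ (x (n + 1)) := hxmax
      have qH := quad_growth D hDcv N Φ hΦsc η (M n + mvec n) (x (n + 1)) hxD hxmax'
      have qGn := quad_growth D hDcv N Φ hΦsc η (M n) (y n) (hyD n) (hymax n)
      have qGn1 := quad_growth D hDcv N Φ hΦsc η (M (n + 1)) (y (n + 1)) (hyD (n + 1))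
        (hymax (n + 1))
      have s2 := qH (y (n + 1)) (hyD (n + 1))
      have s5 := qGn1 (x (n + 1)) hxD
      have s6 := qGn (x (n + 1)) hxD
      -- identify the norm quantities
      have hb1 : N (y (n + 1) - x (n + 1)) = B (n + 1) := rfl
      have hb1' : N (x (n + 1) - y (n + 1)) = B (n + 1) := by
        rw [← myN_neg N hNsmul (x (n + 1) - y (n + 1)), neg_sub]
      have ha1 : N (x (n + 1) - y n) = A (n + 1) := rfl
      rw [hb1] at s2
      rw [hb1'] at s5
      rw [ha1] at s6
      -- inner ℝ product identities
      have hMn1 : M (n + 1) = (M n + mvec n) + (mvec (n + 1) - mvec n) := by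
        rw [hMsucc n]; abel
      have e1 : (inner ℝ (M (n + 1)) (y (n + 1)) : ℝ) =
          (inner ℝ (M n + mvec n) (y (n + 1)) : ℝ)
            + (inner ℝ (mvec (n + 1) - mvec n) (y (n + 1)) : ℝ) := by
        rw [hMn1, inner_add_left]
      have e2 : (inner ℝ (M (n + 1)) (x (n + 1)) : ℝ) =
          (inner ℝ (M n + mvec n) (x (n + 1)) : ℝ)
            + (inner ℝ (mvec (n + 1) - mvec n) (x (n + 1)) : ℝ) := by
        rw [hMn1, inner_add_left]
      have e4 : (inner ℝ (M (n + 1)) (x (n + 1)) : ℝ) =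
          (inner ℝ (M n) (x (n + 1)) : ℝ) + (inner ℝ (mvec (n + 1)) (x (n + 1)) : ℝ) := by
        rw [hMsucc n, inner_add_left]
      have hdual : (inner ℝ (mvec (n + 1) - mvec n) (y (n + 1)) : ℝ)
          - (inner ℝ (mvec (n + 1) - mvec n) (x (n + 1)) : ℝ) ≤ ND (n + 1) * B (n + 1) := by
        have h1 := inner_le_dualNorm N hNadd hNsmul hNdef (mvec (n + 1) - mvec n)
          (y (n + 1) - x (n + 1))
        rw [inner_sub_right, hb1] at h1
        exact h1
      have hstep := step_arith η
        (inner ℝ (M n + mvec n) (y (n + 1)) : ℝ) (inner ℝ (M n + mvec n) (x (n + 1)) : ℝ)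
        (inner ℝ (M (n + 1)) (y (n + 1)) : ℝ) (inner ℝ (M (n + 1)) (x (n + 1)) : ℝ)
        (inner ℝ (mvec (n + 1) - mvec n) (y (n + 1)) : ℝ)
        (inner ℝ (mvec (n + 1) - mvec n) (x (n + 1)) : ℝ)
        (inner ℝ (M n) (x (n + 1)) : ℝ) (inner ℝ (M n) (y n) : ℝ)
        (inner ℝ (mvec (n + 1)) (x (n + 1)) : ℝ)
        (Φ (y (n + 1))) (Φ (x (n + 1))) (Φ (y n))
        (B (n + 1)) (A (n + 1)) (ND (n + 1))
        hη (hNnn _) (hNDnn _) e1 e2 e4 s2 s5 s6 hdual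
      rw [Finset.sum_Icc_succ_top (by omega : 1 ≤ n + 1)]
      linarith [hstep, ihn]
  -- triangle inequality chain
  have claim2 : ∀ n : ℕ, 1 ≤ n →
      ∑ t ∈ Finset.Icc 1 n, (1/4) * (N (x t - x (t - 1)))^2 ≤
        ∑ t ∈ Finset.Icc 1 n, ((1/2) * (A t)^2 + (1/2) * (B t)^2) - (1/2) * (B n)^2 := by
    intro n
    induction n with
    | zero => omega
    | succ n ih =>
      intro _
      rcases Nat.eq_zero_or_pos n with hn0 | hn1
      · subst hn0
        simp only [Finset.Icc_self, Finset.sum_singleton]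
        have hC1 : N (x 1 - x (1 - 1)) = 0 := by
          norm_num
          rw [hx0, sub_self, myN_zero N hNsmul]
        rw [hC1]
        nlinarith [sq_nonneg (A 1)]
      · have ihn := ih hn1
        have htri : N (x (n + 1) - x n) ≤ A (n + 1) + B n := by
          have heq : x (n + 1) - x n = (x (n + 1) - y n) + (y n - x n) := by abel
          rw [heq]
          exact hNadd (x (n + 1) - y n) (y n - x n)
        have hkey : (1/4) * (N (x (n + 1) - x n))^2 ≤
            (1/2) * (B n)^2 + (1/2) * (A (n + 1))^2 := by
          nlinarith [htri, hNnn (x (n + 1) - x n), hNnn (x (n + 1) - y n),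
            hNnn (y n - x n), sq_nonneg (A (n + 1) - B n)]
        rw [Finset.sum_Icc_succ_top (by omega : 1 ≤ n + 1),
          Finset.sum_Icc_succ_top (by omega : 1 ≤ n + 1)]
        have hsimp : (n + 1 : ℕ) - 1 = n := by omega
        rw [hsimp]
        linarith [ihn, hkey]
  -- concavity / gradient step
  have hregret : ∀ t ∈ Finset.Icc 1 T, f t xs - f t (x t) ≤
      (inner ℝ (mvec t) xs : ℝ) - (inner ℝ (mvec t) (x t) : ℝ) := by
    intro t ht
    rw [Finset.mem_Icc] at ht
    have hgrad := concave_grad (f t) (hfconc t ht.1 ht.2) (hfdiff t ht.1 ht.2) (x t) xs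
    rw [← hm t ht.1 ht.2, inner_sub_right] at hgrad
    exact hgrad
  -- assemble
  have hmain := claim T (le_refl T)
  have hGxs := hymax T xs hxs
  have hM0' : (inner ℝ (M 0) (y 0) : ℝ) = 0 := by rw [hM0, inner_zero_left]
  have hub : Φ xs ≤ sSup (Φ '' D) := le_csSup himg.bddAbove ⟨xs, hxs, rfl⟩
  have hlb : sInf (Φ '' D) ≤ Φ (y 0) := csInf_le himg.bddBelow ⟨y 0, hyD 0, rfl⟩
  have hsum_inner : (inner ℝ (M T) xs : ℝ) = ∑ t ∈ Finset.Icc 1 T, (inner ℝ (mvec t) xs : ℝ) := by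
    rw [hM]; exact sum_inner _ _ _
  have hsplit : ∑ t ∈ Finset.Icc 1 T, (η * (inner ℝ (mvec t) (x t) : ℝ)
      + η^2 * (ND t)^2 - (1/2) * (A t)^2 - (1/2) * (B t)^2)
      = η * (∑ t ∈ Finset.Icc 1 T, (inner ℝ (mvec t) (x t) : ℝ))
        + η^2 * (∑ t ∈ Finset.Icc 1 T, (ND t)^2)
        - (∑ t ∈ Finset.Icc 1 T, ((1/2) * (A t)^2 + (1/2) * (B t)^2)) := by
    rw [Finset.mul_sum, Finset.mul_sum, ← Finset.sum_add_distrib, ← Finset.sum_sub_distrib]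
    exact Finset.sum_congr rfl fun t _ => by ring
  set SX : ℝ := ∑ t ∈ Finset.Icc 1 T, (inner ℝ (mvec t) xs : ℝ) with hSX
  set SM : ℝ := ∑ t ∈ Finset.Icc 1 T, (inner ℝ (mvec t) (x t) : ℝ) with hSM
  set SU : ℝ := ∑ t ∈ Finset.Icc 1 T, (ND t)^2 with hSU
  set SAB : ℝ := ∑ t ∈ Finset.Icc 1 T, ((1/2) * (A t)^2 + (1/2) * (B t)^2) with hSAB
  set SC : ℝ := ∑ t ∈ Finset.Icc 1 T, (N (x t - x (t - 1)))^2 with hSC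
  set SR : ℝ := ∑ t ∈ Finset.Icc 1 T, (f t xs - f t (x t)) with hSR
  have ha : SR ≤ SX - SM := by
    rw [hSR, hSX, hSM, ← Finset.sum_sub_distrib]
    exact Finset.sum_le_sum hregret
  have hb : η * SX - Φ xs ≤ - Φ (y 0) + (η * SM + η^2 * SU - SAB) := by
    have h1 := hGxs
    rw [hsum_inner] at h1
    have h2 := hmain
    rw [hM0', hsplit] at h2
    linarith
  have hc : (1/4) * SC ≤ SAB := by
    have h := claim2 T hT1
    have hC : (1/4) * SC = ∑ t ∈ Finset.Icc 1 T, (1/4) * (N (x t - x (t - 1)))^2 := by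
      rw [hSC, Finset.mul_sum]
    rw [hC]
    have hBnn2 : 0 ≤ (1/2) * (B T)^2 := by positivity
    linarith
  have hd : Φ xs - Φ (y 0) ≤ R := by rw [hR]; linarith
  have hmulSR : η * SR ≤ η * SX - η * SM := by
    have h1 : η * SR ≤ η * (SX - SM) := mul_le_mul_of_nonneg_left ha (le_of_lt hη)
    have h2 : η * (SX - SM) = η * SX - η * SM := by ring
    linarith
  have hfin : η * SR ≤ R + η^2 * SU - (1/4) * SC := by linarith
  have hrhs : η * (R / η + η * SU - (1 / (4 * η)) * SC) = R + η^2 * SU - (1/4) * SC := by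
    field_simp
  have hgoal : η * SR ≤ η * (R / η + η * SU - (1 / (4 * η)) * SC) := by
    rw [hrhs]; exact hfin
  exact le_of_mul_le_mul_left hgoal hη
end

section
/- Fix an integer N ≥ 1 (the number of players). For each player i ∈ {1,…,N}, let D_i ⊆ ℝ^{d_i} be a nonempty set, let N_i : ℝ^{d_i} → ℝ be a norm with dual norm N_i*(v) := sup{⟨v,u⟩ : N_i(u) ≤ 1}, and let R_i ≥ 0 and L_i ≥ 0 be constants with ∑_{j=1}^N L_j² > 0. Let x^0, x^1, …, x^T be a sequence of joint strategies with x^t = (x_1^t,…,x_N^t) ∈ ∏_j D_j, and let m_i : ∏_j D_j → ℝ^{d_i} be payoff-vector maps satisfying the Lipschitz condition N_i*( m_i(x) − m_i(y) ) ≤ L_i ∑_{j=1}^N N_j( x_j − y_j ) for all joint strategies x, y. Set η := 1/(2√(N ∑_{j=1}^N L_j²)) and m_i^t := m_i(x^t). Suppose real numbers r_1(T),…,r_N(T) satisfy, for each i, the RVU bound r_i(T) ≤ R_i/η + η ∑_{t=1}^T N_i*( m_i^t − m_i^{t−1} )² − (1/(4η)) ∑_{t=1}^T N_i( x_i^t −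 x_i^{t−1} )². Then the sum of regrets is bounded by a constant independent of T: ∑_{i=1}^N r_i(T) ≤ 2 (∑_{i=1}^N R_i) · √( N ∑_{i=1}^N L_i² ). -/
/-- If every player's regret satisfies the RVU bound and the payoff vectors are
Lipschitz, the sum of regrets is bounded by a constant independent of `T`. -/
theorem sum_of_regrets_bound
    (N : ℕ) (hN : 1 ≤ N) (T : ℕ)
    (d : Fin N → ℕ)
    (D : ∀ i, Set (EuclideanSpace ℝ (Fin (d i))))
    (hDne : ∀ i, (D i).Nonempty)
    (Nrm : ∀ i, EuclideanSpace ℝ (Fin (d i)) → ℝ)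
    (hNadd : ∀ i (u v : EuclideanSpace ℝ (Fin (d i))), Nrm i (u + v) ≤ Nrm i u + Nrm i v)
    (hNsmul : ∀ i (c : ℝ) (u : EuclideanSpace ℝ (Fin (d i))), Nrm i (c • u) = |c| * Nrm i u)
    (hNdef : ∀ i (u : EuclideanSpace ℝ (Fin (d i))), Nrm i u = 0 → u = 0)
    (R L : Fin N → ℝ) (hR : ∀ i, 0 ≤ R i) (hL : ∀ i, 0 ≤ L i)
    (hLpos : 0 < ∑ j, (L j)^2)
    (x : ℕ → ∀ j, EuclideanSpace ℝ (Fin (d j)))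
    (hx : ∀ t ≤ T, ∀ j, x t j ∈ D j)
    (mv : ∀ i, (∀ j, EuclideanSpace ℝ (Fin (d j))) → EuclideanSpace ℝ (Fin (d i)))
    (hLip : ∀ i, ∀ a b : ∀ j, EuclideanSpace ℝ (Fin (d j)),
      (∀ j, a j ∈ D j) → (∀ j, b j ∈ D j) →
      dualNorm (Nrm i) (mv i a - mv i b) ≤ L i * ∑ j, Nrm j (a j - b j))
    (η : ℝ) (hη : η = 1 / (2 * Real.sqrt (N * ∑ j, (L j)^2)))
    (r : Fin N → ℝ)
    (hRVU : ∀ i, r i ≤ R i / η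
      + η * ∑ t ∈ Finset.Icc 1 T, (dualNorm (Nrm i) (mv i (x t) - mv i (x (t - 1))))^2
      - (1 / (4 * η)) * ∑ t ∈ Finset.Icc 1 T, (Nrm i (x t i - x (t - 1) i))^2) :
    ∑ i, r i ≤ 2 * (∑ i, R i) * Real.sqrt (N * ∑ i, (L i)^2) := by
  set S : ℝ := ∑ j, (L j)^2 with hS
  have hKpos : (0:ℝ) < (N:ℝ) * S := by
    apply mul_pos _ hLpos
    exact_mod_cast Nat.lt_of_lt_of_le Nat.zero_lt_one hN
  set s := Real.sqrt ((N:ℝ) * S) with hsdef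
  have hspos : 0 < s := Real.sqrt_pos.2 hKpos
  have hs2 : s^2 = (N:ℝ) * S := Real.sq_sqrt hKpos.le
  have hηpos : 0 < η := by rw [hη]; positivity
  -- dual norm is nonnegative
  have hdual_nonneg : ∀ i (v : EuclideanSpace ℝ (Fin (d i))), 0 ≤ dualNorm (Nrm i) v := by
    intro i v
    apply Real.sSup_nonneg'
    refine ⟨0, ⟨0, ?_, by simp⟩, le_refl 0⟩
    have h0 : Nrm i ((0:ℝ) • (0 : EuclideanSpace ℝ (Fin (d i)))) = 0 := by
      rw [hNsmul]; simp
    simpa using h0.le.trans zero_le_one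
  -- key pointwise bound
  have hkey : ∀ t ∈ Finset.Icc 1 T, ∀ i,
      (dualNorm (Nrm i) (mv i (x t) - mv i (x (t - 1))))^2
        ≤ (L i)^2 * ((N:ℝ) * ∑ j, (Nrm j (x t j - x (t-1) j))^2) := by
    intro t ht i
    simp only [Finset.mem_Icc] at ht
    have h1 := hLip i (x t) (x (t-1)) (hx t ht.2) (hx (t-1) (le_trans (Nat.sub_le t 1) ht.2))
    have h2 : (dualNorm (Nrm i) (mv i (x t) - mv i (x (t - 1))))^2
        ≤ (L i * ∑ j, Nrm j (x t j - x (t-1) j))^2 :=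
      pow_le_pow_left₀ (hdual_nonneg i _) h1 2
    refine h2.trans ?_
    rw [mul_pow]
    apply mul_le_mul_of_nonneg_left _ (sq_nonneg _)
    have := sq_sum_le_card_mul_sum_sq (s := (Finset.univ : Finset (Fin N)))
      (f := fun j => Nrm j (x t j - x (t-1) j))
    simpa using this
  -- sum bound
  have hsum : ∑ i, r i ≤ ∑ i, (R i / η
      + η * ∑ t ∈ Finset.Icc 1 T, (dualNorm (Nrm i) (mv i (x t) - mv i (x (t - 1))))^2
      - (1 / (4 * η)) * ∑ t ∈ Finset.Icc 1 T, (Nrm i (x t i - x (t - 1) i))^2) :=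
    Finset.sum_le_sum (fun i _ => hRVU i)
  have hcancel : η * ((N:ℝ) * S) = 1 / (4 * η) := by
    rw [hη, eq_div_iff (by positivity)]
    field_simp
    nlinarith [hs2]
  set W : ℝ := ∑ t ∈ Finset.Icc 1 T, ∑ j, (Nrm j (x t j - x (t-1) j))^2 with hWdef
  have hW : ∑ i, ∑ t ∈ Finset.Icc 1 T, (Nrm i (x t i - x (t - 1) i))^2 = W := by
    rw [hWdef]; exact Finset.sum_comm
  have hquad : ∑ i, (η * ∑ t ∈ Finset.Icc 1 T,
        (dualNorm (Nrm i) (mv i (x t) - mv i (x (t - 1))))^2)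
      ≤ (1 / (4 * η)) * ∑ i, ∑ t ∈ Finset.Icc 1 T, (Nrm i (x t i - x (t - 1) i))^2 := by
    calc ∑ i, (η * ∑ t ∈ Finset.Icc 1 T,
          (dualNorm (Nrm i) (mv i (x t) - mv i (x (t - 1))))^2)
        ≤ ∑ i, (η * ((L i)^2 * ((N:ℝ) * W))) := by
          apply Finset.sum_le_sum; intro i _
          apply mul_le_mul_of_nonneg_left _ hηpos.le
          calc ∑ t ∈ Finset.Icc 1 T,
                (dualNorm (Nrm i) (mv i (x t) - mv i (x (t - 1))))^2
              ≤ ∑ t ∈ Finset.Icc 1 T,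
                (L i)^2 * ((N:ℝ) * ∑ j, (Nrm j (x t j - x (t-1) j))^2) :=
                Finset.sum_le_sum (fun t ht => hkey t ht i)
            _ = (L i)^2 * ((N:ℝ) * W) := by
                rw [hWdef, Finset.mul_sum, Finset.mul_sum]
      _ = η * ((N:ℝ) * S) * W := by
          rw [← Finset.mul_sum, ← Finset.sum_mul, ← hS]; ring
      _ = (1 / (4 * η)) * W := by rw [hcancel]
      _ = (1 / (4 * η)) * ∑ i, ∑ t ∈ Finset.Icc 1 T,
            (Nrm i (x t i - x (t - 1) i))^2 := by rw [hW]
  have h2 : ∑ i, r i ≤ ∑ i, R i / η := by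
    have hthis := hsum
    simp only [Finset.sum_sub_distrib, Finset.sum_add_distrib] at hthis
    have h3 : ∑ i, (1 / (4 * η)) * ∑ t ∈ Finset.Icc 1 T, (Nrm i (x t i - x (t - 1) i))^2
        = (1 / (4 * η)) * ∑ i, ∑ t ∈ Finset.Icc 1 T, (Nrm i (x t i - x (t - 1) i))^2 := by
      rw [Finset.mul_sum]
    linarith [hquad, h3]
  calc ∑ i, r i ≤ ∑ i, R i / η := h2
    _ = (∑ i, R i) * (2 * s) := by rw [← Finset.sum_div, hη]; field_simp
    _ = 2 * (∑ i, R i) * s := by ring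
end

section
/- Let n ≥ 1 and let W be an n×n complex Hermitian matrix with eigenvalues μ_1,…,μ_n. Then for every density matrix X (an n×n complex Hermitian positive semidefinite matrix with trace 1) with eigenvalues λ_1(X),…,λ_n(X): Re(tr(W·X)) + ∑_{i=1}^n negMulLog(λ_i(X)) ≤ log( ∑_{i=1}^n exp(μ_i) ), with equality when X = exp(W)/tr(exp(W)), where exp(W) is the matrix exponential of W; moreover exp(W)/tr(exp(W)) is itself a density matrix. -/
open scoped ComplexOrder

open Polynomial Matrix Finset

section GibbsAux

lemma gibbs_charmatrix_diag {n : ℕ} (d : Fin n → ℂ) :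
    charmatrix (diagonal d) = diagonal (fun i => (X : ℂ[X]) - C (d i)) := by
  ext i j
  by_cases h : i = j
  · subst h; simp [charmatrix_apply_eq]
  · simp [charmatrix_apply_ne _ _ _ h, diagonal_apply_ne _ h]

lemma gibbs_charpoly_diag {n : ℕ} (d : Fin n → ℂ) :
    (diagonal d).charpoly = ∏ i, ((X : ℂ[X]) - C (d i)) := by
  rw [Matrix.charpoly, gibbs_charmatrix_diag, det_diagonal]

lemma gibbs_charpoly_unitary_conj {n : ℕ} (V B : Matrix (Fin n) (Fin n) ℂ)
    (h1 : V * star V = 1) (h2 : star V * V = 1) :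
    (V * B * star V).charpoly = B.charpoly := by
  have mapmul : ∀ (P Q : Matrix (Fin n) (Fin n) ℂ),
      (P * Q).map (C : ℂ →+* ℂ[X]) = P.map C * Q.map C := fun P Q =>
    Matrix.map_mul
  have scalar_comm : charmatrix (V * B * star V) =
      V.map C * charmatrix B * (star V).map C := by
    unfold charmatrix
    rw [Matrix.mul_sub, Matrix.sub_mul]
    congr 1
    · have : (V.map (C : ℂ →+* ℂ[X])) * (Matrix.scalar (Fin n)) (X : ℂ[X]) =
          (Matrix.scalar (Fin n)) (X : ℂ[X]) * V.map C :=
        (Matrix.scalar_commute (X : ℂ[X]) (Commute.all _) _).symm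
      rw [this, Matrix.mul_assoc, ← mapmul, h1]
      simp
    · show (V * B * star V).map (C : ℂ →+* ℂ[X]) = _ * (B.map C) * _
      rw [mapmul, mapmul]
  rw [Matrix.charpoly, Matrix.charpoly, scalar_comm, det_mul, det_mul, mul_comm, ← mul_assoc,
    ← det_mul, ← mapmul, h2]
  simp

lemma gibbs_roots_prod {n : ℕ} (a : Fin n → ℂ) :
    (∏ i, ((X : ℂ[X]) - C (a i))).roots = univ.val.map a := by
  rw [Finset.prod_eq_multiset_prod]
  have : Multiset.map (fun i => (X : ℂ[X]) - C (a i)) univ.val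
      = Multiset.map (fun z => (X : ℂ[X]) - C z) (univ.val.map a) := by
    rw [Multiset.map_map]; rfl
  rw [this, roots_multiset_prod_X_sub_C]

lemma gibbs_eig_multiset {n : ℕ} {A : Matrix (Fin n) (Fin n) ℂ} (hA : A.IsHermitian)
    (d : Fin n → ℝ) (V : Matrix (Fin n) (Fin n) ℂ)
    (h1 : V * star V = 1) (h2 : star V * V = 1)
    (hAV : A = V * diagonal ((↑) ∘ d) * star V) :
    univ.val.map hA.eigenvalues = univ.val.map d := by
  have hU1 : (hA.eigenvectorUnitary : Matrix (Fin n) (Fin n) ℂ) *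
      star (hA.eigenvectorUnitary : Matrix (Fin n) (Fin n) ℂ) = 1 :=
    Unitary.coe_mul_star_self _
  have hU2 : star (hA.eigenvectorUnitary : Matrix (Fin n) (Fin n) ℂ) *
      (hA.eigenvectorUnitary : Matrix (Fin n) (Fin n) ℂ) = 1 :=
    Unitary.coe_star_mul_self _
  have e1 : A.charpoly = ∏ i, ((X : ℂ[X]) - C ((hA.eigenvalues i : ℂ))) := by
    conv_lhs => rw [show A = (hA.eigenvectorUnitary : Matrix (Fin n) (Fin n) ℂ) * diagonal (((↑) : ℝ → ℂ) ∘ hA.eigenvalues) * star (hA.eigenvectorUnitary : Matrix (Fin n) (Fin n) ℂ) from hA.spectral_theorem]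
    rw [gibbs_charpoly_unitary_conj _ _ hU1 hU2, gibbs_charpoly_diag]
    rfl
  have e2 : A.charpoly = ∏ i, ((X : ℂ[X]) - C ((d i : ℂ))) := by
    conv_lhs => rw [hAV]
    rw [gibbs_charpoly_unitary_conj _ _ h1 h2, gibbs_charpoly_diag]
    rfl
  have := congrArg Polynomial.roots (e1.symm.trans e2)
  rw [gibbs_roots_prod, gibbs_roots_prod] at this
  apply Multiset.map_injective Complex.ofReal_injective
  rw [Multiset.map_map, Multiset.map_map]
  exact this

lemma gibbs_sum_f_eig {n : ℕ} {A : Matrix (Fin n) (Fin n) ℂ} (hA : A.IsHermitian)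
    (d : Fin n → ℝ) (V : Matrix (Fin n) (Fin n) ℂ)
    (h1 : V * star V = 1) (h2 : star V * V = 1)
    (hAV : A = V * diagonal ((↑) ∘ d) * star V) (f : ℝ → ℝ) :
    ∑ i, f (hA.eigenvalues i) = ∑ i, f (d i) := by
  have h := gibbs_eig_multiset hA d V h1 h2 hAV
  have h' : (univ.val.map hA.eigenvalues).map f = (univ.val.map d).map f := by rw [h]
  rw [Multiset.map_map, Multiset.map_map] at h'
  calc ∑ i, f (hA.eigenvalues i) = (univ.val.map (f ∘ hA.eigenvalues)).sum :=
        Finset.sum_eq_multiset_sum _ _ |>.trans rfl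
    _ = (univ.val.map (f ∘ d)).sum := by rw [h']
    _ = ∑ i, f (d i) := rfl

lemma gibbs_scalar {n : ℕ} (p w : Fin n → ℝ) (hp : ∀ i, 0 ≤ p i) (hps : ∑ i, p i = 1)
    (S : ℝ) (hS : 0 < S) (hwS : ∑ i, Real.exp (w i) ≤ S) :
    ∑ i, (p i * w i + Real.negMulLog (p i)) ≤ Real.log S := by
  have key : ∀ i, p i * w i + Real.negMulLog (p i) - p i * Real.log S
      ≤ Real.exp (w i) / S - p i := by
    intro i
    rcases eq_or_lt_of_le (hp i) with h | h
    · rw [← h]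
      simp [Real.negMulLog]
      positivity
    · have hlog : Real.log (Real.exp (w i) / (p i * S)) ≤ Real.exp (w i) / (p i * S) - 1 :=
        Real.log_le_sub_one_of_pos (by positivity)
      have hexp : Real.log (Real.exp (w i) / (p i * S)) = w i - Real.log (p i) - Real.log S := by
        rw [Real.log_div (Real.exp_pos _).ne' (by positivity), Real.log_exp,
          Real.log_mul h.ne' hS.ne']
        ring
      have hm := mul_le_mul_of_nonneg_left hlog (hp i)
      rw [hexp] at hm
      calc p i * w i + Real.negMulLog (p i) - p i * Real.log S
          = p i * (w i - Real.log (p i) - Real.log S) := by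
            rw [Real.negMulLog]; ring
        _ ≤ p i * (Real.exp (w i) / (p i * S) - 1) := hm
        _ = Real.exp (w i) / S - p i := by field_simp
  have e1 : ∑ i, (p i * w i + Real.negMulLog (p i) - p i * Real.log S)
      = (∑ i, (p i * w i + Real.negMulLog (p i))) - Real.log S := by
    rw [Finset.sum_sub_distrib, ← Finset.sum_mul, hps, one_mul]
  have e2 : ∑ i, (Real.exp (w i) / S - p i) = (∑ i, Real.exp (w i)) / S - 1 := by
    rw [Finset.sum_sub_distrib, ← Finset.sum_div, hps]
  have hsum := Finset.sum_le_sum (s := univ) (fun i _ => key i)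
  rw [e1, e2] at hsum
  have h2 : (∑ i, Real.exp (w i)) / S ≤ 1 := by
    rw [div_le_one hS]; exact hwS
  linarith

lemma gibbs_peierls {n : ℕ} (q : Fin n → Fin n → ℝ) (μ : Fin n → ℝ)
    (hq0 : ∀ i j, 0 ≤ q i j) (hrow : ∀ i, ∑ j, q i j = 1) (hcol : ∀ j, ∑ i, q i j = 1) :
    ∑ i, Real.exp (∑ j, q i j * μ j) ≤ ∑ j, Real.exp (μ j) := by
  have h1 : ∀ i, Real.exp (∑ j, q i j * μ j) ≤ ∑ j, q i j * Real.exp (μ j) := by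
    intro i
    have := convexOn_exp.map_sum_le (t := univ) (w := q i) (p := μ)
      (fun j _ => hq0 i j) (hrow i) (fun j _ => Set.mem_univ _)
    simpa using this
  calc ∑ i, Real.exp (∑ j, q i j * μ j) ≤ ∑ i, ∑ j, q i j * Real.exp (μ j) :=
        Finset.sum_le_sum fun i _ => h1 i
    _ = ∑ j, (∑ i, q i j) * Real.exp (μ j) := by
        rw [Finset.sum_comm]
        simp [Finset.sum_mul]
    _ = ∑ j, Real.exp (μ j) := by simp [hcol]

/-- Diagonal entries of `Q * diagonal (coe ∘ μ) * star Q`. -/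
lemma gibbs_diag_entry {n : ℕ} (Q : Matrix (Fin n) (Fin n) ℂ) (μ : Fin n → ℝ) (i : Fin n) :
    (Q * diagonal (((↑) : ℝ → ℂ) ∘ μ) * star Q) i i
      = ((∑ k, Complex.normSq (Q i k) * μ k : ℝ) : ℂ) := by
  rw [Matrix.mul_apply]
  refine Eq.trans (Finset.sum_congr rfl fun k _ => ?_) (Complex.ofReal_sum _ _).symm
  rw [Matrix.mul_diagonal]
  have : (star Q) k i = (starRingEnd ℂ) (Q i k) := rfl
  rw [this]
  have : Q i k * ((starRingEnd ℂ) (Q i k)) = (Complex.normSq (Q i k) : ℂ) :=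
    Complex.mul_conj _
  push_cast
  calc Q i k * ((μ k : ℝ) : ℂ) * (starRingEnd ℂ) (Q i k)
      = (Q i k * (starRingEnd ℂ) (Q i k)) * ((μ k : ℝ) : ℂ) := by ring
    _ = (Complex.normSq (Q i k) : ℂ) * ((μ k : ℝ) : ℂ) := by rw [this]

end GibbsAux

section Core

lemma gibbs_trace_conj {n : ℕ} (V B : Matrix (Fin n) (Fin n) ℂ) (h2 : star V * V = 1) :
    (V * B * star V).trace = B.trace := by
  rw [Matrix.trace_mul_cycle, h2, Matrix.one_mul]

lemma gibbs_trace_mul_diag {n : ℕ} (M : Matrix (Fin n) (Fin n) ℂ) (d : Fin n → ℂ) :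
    (M * diagonal d).trace = ∑ i, M i i * d i := by
  simp [Matrix.trace, Matrix.diag, Matrix.mul_diagonal]

lemma gibbs_core {n : ℕ} (U V : Matrix (Fin n) (Fin n) ℂ) (μ lam : Fin n → ℝ)
    (hU1 : U * star U = 1) (hU2 : star U * U = 1)
    (hV1 : V * star V = 1) (hV2 : star V * V = 1)
    (W X : Matrix (Fin n) (Fin n) ℂ)
    (hWeq : W = U * diagonal (((↑) : ℝ → ℂ) ∘ μ) * star U)
    (hXeq : X = V * diagonal (((↑) : ℝ → ℂ) ∘ lam) * star V)
    (hlam0 : ∀ i, 0 ≤ lam i) (hlam1 : ∑ i, lam i = 1)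
    (S : ℝ) (hS : 0 < S) (hSle : ∑ i, Real.exp (μ i) ≤ S) :
    (W * X).trace.re + ∑ i, Real.negMulLog (lam i) ≤ Real.log S := by
  set Q : Matrix (Fin n) (Fin n) ℂ := star V * U with hQ
  have hQs : star Q = star U * V := by rw [hQ, StarMul.star_mul, star_star]
  have hQ1 : Q * star Q = 1 := by
    rw [hQ, hQs, Matrix.mul_assoc, ← Matrix.mul_assoc U, hU1, Matrix.one_mul, hV2]
  have hQ2 : star Q * Q = 1 := by
    rw [hQ, hQs, Matrix.mul_assoc, ← Matrix.mul_assoc V, hV1, Matrix.one_mul, hU2]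
  set q : Fin n → Fin n → ℝ := fun i k => Complex.normSq (Q i k) with hq
  set w : Fin n → ℝ := fun i => ∑ k, q i k * μ k with hw
  have hq0 : ∀ i k, 0 ≤ q i k := fun i k => Complex.normSq_nonneg _
  have hrow : ∀ i, ∑ k, q i k = 1 := by
    intro i
    have h1 : ((∑ k, q i k : ℝ) : ℂ) = (1 : Matrix (Fin n) (Fin n) ℂ) i i := by
      rw [← hQ1, Matrix.mul_apply]
      push_cast
      refine Finset.sum_congr rfl fun k _ => ?_
      exact (Complex.mul_conj _).symm
    rw [Matrix.one_apply_eq] at h1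
    exact_mod_cast h1
  have hcol : ∀ k, ∑ i, q i k = 1 := by
    intro k
    have h1 : ((∑ i, q i k : ℝ) : ℂ) = (1 : Matrix (Fin n) (Fin n) ℂ) k k := by
      rw [← hQ2, Matrix.mul_apply]
      push_cast
      refine Finset.sum_congr rfl fun i _ => ?_
      rw [mul_comm]
      exact (Complex.mul_conj _).symm
    rw [Matrix.one_apply_eq] at h1
    exact_mod_cast h1
  have hM : star V * W * V = Q * diagonal (((↑) : ℝ → ℂ) ∘ μ) * star Q := by
    rw [hWeq, hQ, hQs]
    simp only [Matrix.mul_assoc]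
  have hdiagM : ∀ i, (star V * W * V) i i = ((w i : ℝ) : ℂ) := by
    intro i
    rw [hM, gibbs_diag_entry]
  have htrace : (W * X).trace = ((∑ i, lam i * w i : ℝ) : ℂ) := by
    rw [hXeq]
    have e1 : W * (V * diagonal (((↑) : ℝ → ℂ) ∘ lam) * star V)
        = (W * V * diagonal (((↑) : ℝ → ℂ) ∘ lam)) * star V := by
      simp only [Matrix.mul_assoc]
    rw [e1, Matrix.trace_mul_comm]
    have e2 : star V * (W * V * diagonal (((↑) : ℝ → ℂ) ∘ lam))
        = (star V * W * V) * diagonal (((↑) : ℝ → ℂ) ∘ lam) := by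
      simp only [Matrix.mul_assoc]
    rw [e2, gibbs_trace_mul_diag]
    push_cast
    refine Finset.sum_congr rfl fun i _ => ?_
    rw [hdiagM i]
    simp only [Function.comp_apply]
    ring
  have htre : (W * X).trace.re = ∑ i, lam i * w i := by
    rw [htrace, Complex.ofReal_re]
  have hwS : ∑ i, Real.exp (w i) ≤ S :=
    le_trans (gibbs_peierls q μ hq0 hrow hcol) hSle
  have final := gibbs_scalar lam w hlam0 hlam1 S hS hwS
  rw [Finset.sum_add_distrib] at final
  rw [htre]
  exact final

end Core

/-- Gibbs variational principle for Hermitian matrices: for a Hermitian matrix `W` with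
eigenvalues `μ i`, every density matrix `X` satisfies
`Re tr(WX) + S(X) ≤ log ∑ i exp (μ i)`, with equality at the Gibbs state
`exp W / tr (exp W)`, which is itself a density matrix. -/
theorem gibbs_variational_principle
    (n : ℕ) (hn : 1 ≤ n)
    (W : Matrix (Fin n) (Fin n) ℂ) (hW : W.IsHermitian) :
    (∀ (X : Matrix (Fin n) (Fin n) ℂ) (hX : X.PosSemidef), X.trace = 1 →
      (W * X).trace.re + ∑ i, Real.negMulLog (hX.1.eigenvalues i) ≤
        Real.log (∑ i, Real.exp (hW.eigenvalues i))) ∧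
    (∃ hG : ((∑ i, Real.exp (hW.eigenvalues i))⁻¹ •
        NormedSpace.exp W : Matrix (Fin n) (Fin n) ℂ).PosSemidef,
      ((∑ i, Real.exp (hW.eigenvalues i))⁻¹ •
        NormedSpace.exp W : Matrix (Fin n) (Fin n) ℂ).trace = 1 ∧
      (W * ((∑ i, Real.exp (hW.eigenvalues i))⁻¹ •
          NormedSpace.exp W : Matrix (Fin n) (Fin n) ℂ)).trace.re
        + ∑ i, Real.negMulLog (hG.1.eigenvalues i)
        = Real.log (∑ i, Real.exp (hW.eigenvalues i))) := by
  have hne : Nonempty (Fin n) := Fin.pos_iff_nonempty.mp hn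
  set μ : Fin n → ℝ := hW.eigenvalues with hμdef
  set Z : ℝ := ∑ i, Real.exp (μ i) with hZdef
  have hZpos : 0 < Z :=
    Finset.sum_pos (fun i _ => Real.exp_pos _) Finset.univ_nonempty
  set U : Matrix (Fin n) (Fin n) ℂ := (hW.eigenvectorUnitary : Matrix (Fin n) (Fin n) ℂ)
    with hUdef
  have hU1 : U * star U = 1 := Unitary.coe_mul_star_self _
  have hU2 : star U * U = 1 := Unitary.coe_star_mul_self _
  have hWeq : W = U * diagonal (((↑) : ℝ → ℂ) ∘ μ) * star U := hW.spectral_theorem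
  constructor
  · -- the inequality
    intro X hX htr
    set V : Matrix (Fin n) (Fin n) ℂ := (hX.1.eigenvectorUnitary : Matrix (Fin n) (Fin n) ℂ)
      with hVdef
    have hV1 : V * star V = 1 := Unitary.coe_mul_star_self _
    have hV2 : star V * V = 1 := Unitary.coe_star_mul_self _
    have hXeq : X = V * diagonal (((↑) : ℝ → ℂ) ∘ hX.1.eigenvalues) * star V :=
      hX.1.spectral_theorem
    have hlam0 : ∀ i, 0 ≤ hX.1.eigenvalues i := hX.eigenvalues_nonneg
    have hlam1 : ∑ i, hX.1.eigenvalues i = 1 := by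
      have h1 : X.trace = ((∑ i, hX.1.eigenvalues i : ℝ) : ℂ) := by
        conv_lhs => rw [hXeq]
        rw [gibbs_trace_conj _ _ hV2, Matrix.trace_diagonal]
        push_cast
        rfl
      exact_mod_cast (h1.symm.trans htr)
    exact gibbs_core U V μ hX.1.eigenvalues hU1 hU2 hV1 hV2 W X hWeq hXeq hlam0 hlam1
      Z hZpos le_rfl
  · -- the Gibbs state
    set g : Fin n → ℝ := fun i => Z⁻¹ * Real.exp (μ i) with hgdef
    have hgpos : ∀ i, 0 < g i := fun i => mul_pos (inv_pos.mpr hZpos) (Real.exp_pos _)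
    have hexpW : NormedSpace.exp W
        = U * diagonal (((↑) : ℝ → ℂ) ∘ fun i => Real.exp (μ i)) * star U := by
      have hUunit : IsUnit U := ⟨⟨U, star U, hU1, hU2⟩, rfl⟩
      have hinv : U⁻¹ = star U := Matrix.inv_eq_right_inv hU1
      calc NormedSpace.exp W
          = NormedSpace.exp (U * diagonal (((↑) : ℝ → ℂ) ∘ μ) * U⁻¹) := by
            rw [hinv, ← hWeq]
        _ = U * NormedSpace.exp (diagonal (((↑) : ℝ → ℂ) ∘ μ)) * U⁻¹ :=
            Matrix.exp_conj U _ hUunit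
        _ = U * diagonal (((↑) : ℝ → ℂ) ∘ fun i => Real.exp (μ i)) * star U := by
            rw [hinv, Matrix.exp_diagonal]
            have hvec : NormedSpace.exp (((↑) : ℝ → ℂ) ∘ μ)
                = ((↑) : ℝ → ℂ) ∘ fun i => Real.exp (μ i) := by
              funext i
              rw [Pi.coe_exp]
              simp only [Function.comp_apply]
              rw [← Complex.exp_eq_exp_ℂ, ← Complex.ofReal_exp]
            rw [hvec]
    have hGeq : Z⁻¹ • NormedSpace.exp W
        = U * diagonal (((↑) : ℝ → ℂ) ∘ g) * star U := by
      rw [hexpW]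
      have hvec2 : (((↑) : ℝ → ℂ) ∘ g)
          = Z⁻¹ • (((↑) : ℝ → ℂ) ∘ fun i => Real.exp (μ i)) := by
        funext i
        simp only [Function.comp_apply, Pi.smul_apply, Complex.real_smul, hgdef]
        push_cast
        ring
      rw [hvec2, Matrix.diagonal_smul, Matrix.mul_smul, Matrix.smul_mul]
    have hGpsd : (Z⁻¹ • NormedSpace.exp W : Matrix (Fin n) (Fin n) ℂ).PosSemidef := by
      rw [hGeq]
      have hdPSD : (diagonal (((↑) : ℝ → ℂ) ∘ g)).PosSemidef :=
        Matrix.posSemidef_diagonal_iff.mpr fun i =>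
          Complex.zero_le_real.mpr (hgpos i).le
      simpa [Matrix.star_eq_conjTranspose] using hdPSD.mul_mul_conjTranspose_same U
    refine ⟨hGpsd, ?_, ?_⟩
    · rw [hGeq, gibbs_trace_conj _ _ hU2, Matrix.trace_diagonal]
      have : ∑ i, (((↑) : ℝ → ℂ) ∘ g) i = ((∑ i, g i : ℝ) : ℂ) := by push_cast; rfl
      rw [this, hgdef]
      rw [← Finset.mul_sum, ← hZdef, inv_mul_cancel₀ hZpos.ne']
      norm_num
    · -- equality
      have hsum_g : ∑ i, g i = 1 := by
        rw [hgdef]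
        simp only [← Finset.mul_sum]
        rw [← hZdef, inv_mul_cancel₀ hZpos.ne']
      have henergy : (W * (Z⁻¹ •
          NormedSpace.exp W : Matrix (Fin n) (Fin n) ℂ)).trace.re = ∑ i, μ i * g i := by
        conv_lhs => rw [hGeq, hWeq]
        have hcancel : ∀ x : Matrix (Fin n) (Fin n) ℂ, star U * (U * x) = x := fun x => by
          rw [← Matrix.mul_assoc, hU2, Matrix.one_mul]
        have e1 : (U * diagonal (((↑) : ℝ → ℂ) ∘ μ) * star U) *
            (U * diagonal (((↑) : ℝ → ℂ) ∘ g) * star U)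
            = U * (diagonal (((↑) : ℝ → ℂ) ∘ μ) * diagonal (((↑) : ℝ → ℂ) ∘ g)) * star U := by
          simp only [Matrix.mul_assoc]
          rw [hcancel]
        rw [e1, Matrix.diagonal_mul_diagonal, gibbs_trace_conj _ _ hU2, Matrix.trace_diagonal]
        have : ∑ i, ((((↑) : ℝ → ℂ) ∘ μ) i * (((↑) : ℝ → ℂ) ∘ g) i)
            = ((∑ i, μ i * g i : ℝ) : ℂ) := by push_cast; rfl
        rw [this, Complex.ofReal_re]
      have hentropy : ∑ i, Real.negMulLog (hGpsd.1.eigenvalues i) = ∑ i, Real.negMulLog (g i) := by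
        exact gibbs_sum_f_eig hGpsd.1 g U hU1 hU2 hGeq Real.negMulLog
      rw [henergy, hentropy]
      have hterm : ∀ i, μ i * g i + Real.negMulLog (g i) = g i * Real.log Z := by
        intro i
        have hlg : Real.log (g i) = -Real.log Z + μ i := by
          rw [hgdef]
          simp only []
          rw [Real.log_mul (inv_pos.mpr hZpos).ne' (Real.exp_pos _).ne', Real.log_inv, Real.log_exp]
        rw [Real.negMulLog, hlg]
        ring
      calc ∑ i, μ i * g i + ∑ i, Real.negMulLog (g i)
          = ∑ i, (μ i * g i + Real.negMulLog (g i)) := (Finset.sum_add_distrib).symm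
        _ = ∑ i, g i * Real.log Z := Finset.sum_congr rfl fun i _ => hterm i
        _ = (∑ i, g i) * Real.log Z := (Finset.sum_mul _ _ _).symm
        _ = Real.log Z := by rw [hsum_g, one_mul]
end

section
/- Let n ≥ 1 and let X and Y be n×n complex Hermitian positive definite matrices with tr(X) = tr(Y) = 1. Let log X and log Y denote the matrix logarithms obtained by applying the real logarithm to the eigenvalues through the continuous functional calculus, and let ν_1,…,ν_n be the (real) eigenvalues of the Hermitian matrix X − Y. Then Re( tr( X · (log X − log Y) ) ) ≥ (1/2) ( ∑_{i=1}^n |ν_i| )². -/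
open scoped ComplexOrder

open Finset

section ScalarLemmas

private lemma cube_bound (a b : ℝ) (ha : 0 < a) (hb : 0 < b) :
    216 * (a * b ^ 2) ≤ (2 * a + 4 * b) ^ 3 := by
  nlinarith [mul_nonneg (sq_nonneg (a - b)) (by linarith : (0:ℝ) ≤ a + 8 * b)]

/-- auxiliary function -/
private noncomputable def phiF (b a : ℝ) : ℝ :=
  a * Real.log a - a * Real.log b - a + b - 3 * (a - b) ^ 2 / (2 * a + 4 * b)

private noncomputable def psiF (b a : ℝ) : ℝ :=
  Real.log a - Real.log b - 6 * (a - b) * (a + 5 * b) / (2 * a + 4 * b) ^ 2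

private lemma denom_pos {a b : ℝ} (ha : 0 < a) (hb : 0 < b) : 0 < 2 * a + 4 * b := by linarith

private lemma hasDerivAt_phiF {a b : ℝ} (ha : 0 < a) (hb : 0 < b) :
    HasDerivAt (phiF b) (psiF b a) a := by
  have hP : (2 * a + 4 * b) ≠ 0 := ne_of_gt (denom_pos ha hb)
  have h1 : HasDerivAt (fun x : ℝ => x * Real.log x) (Real.log a + 1) a :=
    Real.hasDerivAt_mul_log (ne_of_gt ha)
  have h2 : HasDerivAt (fun x : ℝ => x * Real.log b) (Real.log b) a := by
    simpa using (hasDerivAt_mul_const (Real.log b) (x := a))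
  have hnum : HasDerivAt (fun x : ℝ => 3 * (x - b) ^ 2) (3 * (2 * (a - b))) a := by
    have := ((hasDerivAt_id a).sub_const b).pow 2
    simpa [mul_comm, mul_assoc, mul_left_comm] using this.const_mul 3
  have hden : HasDerivAt (fun x : ℝ => 2 * x + 4 * b) 2 a := by
    simpa using ((hasDerivAt_id a).const_mul 2).add_const (4 * b)
  have hq : HasDerivAt (fun x : ℝ => 3 * (x - b) ^ 2 / (2 * x + 4 * b))
      ((3 * (2 * (a - b)) * (2 * a + 4 * b) - 3 * (a - b) ^ 2 * 2) / (2 * a + 4 * b) ^ 2) a :=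
    hnum.div hden hP
  have htot := (((h1.sub h2).sub (hasDerivAt_id a)).add_const b).sub hq
  refine htot.congr_deriv ?_
  rw [psiF]
  field_simp
  ring

private lemma hasDerivAt_psiF {a b : ℝ} (ha : 0 < a) (hb : 0 < b) :
    HasDerivAt (psiF b) (1 / a - 216 * b ^ 2 / (2 * a + 4 * b) ^ 3) a := by
  have hP : (2 * a + 4 * b) ≠ 0 := ne_of_gt (denom_pos ha hb)
  have hP2 : ((2 * a + 4 * b) ^ 2) ≠ 0 := pow_ne_zero _ hP
  have h1 : HasDerivAt Real.log (1 / a) a := by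
    simpa [one_div] using Real.hasDerivAt_log (ne_of_gt ha)
  have hnum : HasDerivAt (fun x : ℝ => 6 * (x - b) * (x + 5 * b))
      (6 * (a - b) + 6 * (a + 5 * b)) a := by
    have := (((hasDerivAt_id a).sub_const b).const_mul 6).mul ((hasDerivAt_id a).add_const (5 * b))
    refine this.congr_deriv ?_
    simp [id]; ring
  have hden : HasDerivAt (fun x : ℝ => (2 * x + 4 * b) ^ 2) (2 * (2 * a + 4 * b) * 2) a := by
    have h0 : HasDerivAt (fun x : ℝ => 2 * x + 4 * b) 2 a := by
      simpa using ((hasDerivAt_id a).const_mul 2).add_const (4 * b)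
    have := h0.pow 2
    refine this.congr_deriv ?_
    ring
  have hq := hnum.div hden hP2
  have htot := (h1.sub_const (Real.log b)).sub hq
  refine htot.congr_deriv ?_
  field_simp
  ring

private lemma psiF_mono {b : ℝ} (hb : 0 < b) : MonotoneOn (psiF b) (Set.Ioi 0) := by
  apply monotoneOn_of_deriv_nonneg (convex_Ioi 0)
  · exact fun x hx => (hasDerivAt_psiF hx hb).continuousAt.continuousWithinAt
  · intro x hx
    rw [interior_Ioi] at hx
    exact (hasDerivAt_psiF hx hb).differentiableAt.differentiableWithinAt
  · intro x hx
    rw [interior_Ioi] at hx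
    have hx' : (0:ℝ) < x := hx
    rw [(hasDerivAt_psiF hx' hb).deriv]
    rw [sub_nonneg, div_le_div_iff₀ (by positivity) hx']
    nlinarith [cube_bound x b hx' hb]

private lemma psiF_at_b {b : ℝ} (hb : 0 < b) : psiF b b = 0 := by
  simp [psiF]

private lemma phiF_at_b {b : ℝ} (hb : 0 < b) : phiF b b = 0 := by
  simp [phiF]

lemma scalar_bregman {a b : ℝ} (ha : 0 < a) (hb : 0 < b) :
    3 * (a - b) ^ 2 / (2 * a + 4 * b) ≤ a * Real.log a - a * Real.log b - a + b := by
  have key : 0 ≤ phiF b a := by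
    rcases le_total b a with hba | hab
    · have hmono : MonotoneOn (phiF b) (Set.Ici b) := by
        apply monotoneOn_of_deriv_nonneg (convex_Ici b)
        · exact fun x hx => (hasDerivAt_phiF (lt_of_lt_of_le hb hx) hb).continuousAt.continuousWithinAt
        · intro x hx
          rw [interior_Ici] at hx
          exact (hasDerivAt_phiF (lt_trans hb hx) hb).differentiableAt.differentiableWithinAt
        · intro x hx
          rw [interior_Ici] at hx
          rw [(hasDerivAt_phiF (lt_trans hb hx) hb).deriv]
          have := psiF_mono hb (Set.mem_Ioi.mpr hb) (Set.mem_Ioi.mpr (lt_trans hb hx)) (le_of_lt hx)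
          rw [psiF_at_b hb] at this
          exact this
      have := hmono (Set.mem_Ici.mpr le_rfl) (Set.mem_Ici.mpr hba) hba
      rwa [phiF_at_b hb] at this
    · have hanti : AntitoneOn (phiF b) (Set.Icc a b) := by
        apply antitoneOn_of_deriv_nonpos (convex_Icc a b)
        · exact fun x hx => (hasDerivAt_phiF (lt_of_lt_of_le ha hx.1) hb).continuousAt.continuousWithinAt
        · intro x hx
          rw [interior_Icc] at hx
          exact (hasDerivAt_phiF (lt_trans ha hx.1) hb).differentiableAt.differentiableWithinAt
        · intro x hx
          rw [interior_Icc] at hx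
          rw [(hasDerivAt_phiF (lt_trans ha hx.1) hb).deriv]
          have := psiF_mono hb (Set.mem_Ioi.mpr (lt_trans ha hx.1)) (Set.mem_Ioi.mpr hb) (le_of_lt hx.2)
          rw [psiF_at_b hb] at this
          exact this
      have := hanti (Set.mem_Icc.mpr ⟨le_rfl, hab⟩) (Set.mem_Icc.mpr ⟨hab, le_rfl⟩) hab
      rw [phiF_at_b hb] at this
      exact this
    
  rw [phiF] at key
  linarith

private lemma key_sum {ι : Type*} [Fintype ι] (lam mu : ι → ℝ) (e d r : ι → ι → ℝ)
    (hlam : ∀ i, 0 < lam i) (hmu : ∀ j, 0 < mu j)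
    (he : ∀ i j, 0 ≤ e i j) (hd : ∀ i j, 0 ≤ d i j)
    (hr : ∀ i j, |r i j| ≤ e i j * d i j)
    (herow : ∀ i, ∑ j, e i j ^ 2 = 1) (hecol : ∀ j, ∑ i, e i j ^ 2 = 1)
    (hdrow : ∀ i, ∑ j, d i j ^ 2 = 1) (hdcol : ∀ j, ∑ i, d i j ^ 2 = 1)
    (hlam1 : ∑ i, lam i = 1) (hmu1 : ∑ j, mu j = 1) :
    (1 / 2) * (∑ i, ∑ j, (lam i - mu j) * r i j) ^ 2 ≤
      ∑ i, ∑ j, e i j ^ 2 * (lam i * Real.log (lam i) - lam i * Real.log (mu j)) := by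
  classical
  have hP : ∀ (i j : ι), (0:ℝ) < 2 * lam i + 4 * mu j := fun i j => by
    have := hlam i; have := hmu j; linarith
  -- Cauchy-Schwarz setup
  set f : ι × ι → ℝ := fun p => e p.1 p.2 * |lam p.1 - mu p.2| * Real.sqrt (3 / (2 * lam p.1 + 4 * mu p.2)) with hf
  set g : ι × ι → ℝ := fun p => d p.1 p.2 * Real.sqrt ((2 * lam p.1 + 4 * mu p.2) / 3) with hg
  have hfg : ∀ p : ι × ι, f p * g p = e p.1 p.2 * d p.1 p.2 * |lam p.1 - mu p.2| := by
    intro p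
    have hne : (2 * lam p.1 + 4 * mu p.2) ≠ 0 := (hP p.1 p.2).ne'
    have h1 : Real.sqrt (3 / (2 * lam p.1 + 4 * mu p.2)) *
        Real.sqrt ((2 * lam p.1 + 4 * mu p.2) / 3) = 1 := by
      rw [← Real.sqrt_mul (div_nonneg (by norm_num) (hP p.1 p.2).le)]
      rw [show 3 / (2 * lam p.1 + 4 * mu p.2) * ((2 * lam p.1 + 4 * mu p.2) / 3) = 1 by
        field_simp]
      exact Real.sqrt_one
    calc f p * g p
        = (e p.1 p.2 * d p.1 p.2 * |lam p.1 - mu p.2|) *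
          (Real.sqrt (3 / (2 * lam p.1 + 4 * mu p.2)) *
           Real.sqrt ((2 * lam p.1 + 4 * mu p.2) / 3)) := by rw [hf, hg]; ring
      _ = _ := by rw [h1, mul_one]
  have hsumg : ∑ p : ι × ι, g p ^ 2 = 2 := by
    have hgp : ∀ p : ι × ι, g p ^ 2 =
        (2/3) * (lam p.1 * d p.1 p.2 ^ 2) + (4/3) * (mu p.2 * d p.1 p.2 ^ 2) := by
      intro p
      rw [hg]
      rw [mul_pow, Real.sq_sqrt (div_nonneg (hP p.1 p.2).le (by norm_num))]
      ring
    rw [Fintype.sum_congr _ _ hgp, Finset.sum_add_distrib]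
    have h1 : ∑ p : ι × ι, (2/3) * (lam p.1 * d p.1 p.2 ^ 2) = 2/3 := by
      rw [← Finset.mul_sum, Fintype.sum_prod_type]
      have : ∀ i : ι, ∑ j, lam i * d i j ^ 2 = lam i := by
        intro i; rw [← Finset.mul_sum, hdrow i, mul_one]
      rw [Fintype.sum_congr _ _ this, hlam1, mul_one]
    have h2 : ∑ p : ι × ι, (4/3) * (mu p.2 * d p.1 p.2 ^ 2) = 4/3 := by
      rw [← Finset.mul_sum, Fintype.sum_prod_type_right]
      have : ∀ j : ι, ∑ i, mu j * d i j ^ 2 = mu j := by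
        intro j; rw [← Finset.mul_sum, hdcol j, mul_one]
      rw [Fintype.sum_congr _ _ this, hmu1, mul_one]
    rw [h1, h2]; norm_num
  have hsumf : ∑ p : ι × ι, f p ^ 2 =
      ∑ p : ι × ι, e p.1 p.2 ^ 2 * (3 * (lam p.1 - mu p.2) ^ 2 / (2 * lam p.1 + 4 * mu p.2)) := by
    apply Finset.sum_congr rfl
    intro p _
    rw [hf, mul_pow, mul_pow, Real.sq_sqrt (div_nonneg (by norm_num) (hP p.1 p.2).le), sq_abs]
    ring
  -- |T| bound
  have hT : |∑ p : ι × ι, (lam p.1 - mu p.2) * r p.1 p.2| ≤ ∑ p : ι × ι, f p * g p := by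
    calc |∑ p : ι × ι, (lam p.1 - mu p.2) * r p.1 p.2|
        ≤ ∑ p : ι × ι, |(lam p.1 - mu p.2) * r p.1 p.2| := Finset.abs_sum_le_sum_abs _ _
      _ ≤ ∑ p : ι × ι, f p * g p := by
          apply Finset.sum_le_sum
          intro p _
          rw [hfg p, abs_mul]
          calc |lam p.1 - mu p.2| * |r p.1 p.2|
              ≤ |lam p.1 - mu p.2| * (e p.1 p.2 * d p.1 p.2) :=
                mul_le_mul_of_nonneg_left (hr p.1 p.2) (abs_nonneg _)
            _ = e p.1 p.2 * d p.1 p.2 * |lam p.1 - mu p.2| := by ring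
  -- combine
  have hCS := Finset.sum_mul_sq_le_sq_mul_sq Finset.univ f g
  have hQ : (∑ p : ι × ι, (lam p.1 - mu p.2) * r p.1 p.2) ^ 2 ≤
      2 * ∑ p : ι × ι, e p.1 p.2 ^ 2 * (3 * (lam p.1 - mu p.2) ^ 2 / (2 * lam p.1 + 4 * mu p.2)) := by
    calc (∑ p : ι × ι, (lam p.1 - mu p.2) * r p.1 p.2) ^ 2
        = |∑ p : ι × ι, (lam p.1 - mu p.2) * r p.1 p.2| ^ 2 := (sq_abs _).symm
      _ ≤ (∑ p : ι × ι, f p * g p) ^ 2 := by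
          apply pow_le_pow_left₀ (abs_nonneg _) hT
      _ ≤ (∑ p : ι × ι, f p ^ 2) * ∑ p : ι × ι, g p ^ 2 := hCS
      _ = 2 * ∑ p : ι × ι, e p.1 p.2 ^ 2 *
            (3 * (lam p.1 - mu p.2) ^ 2 / (2 * lam p.1 + 4 * mu p.2)) := by
          rw [hsumf, hsumg]; ring
  -- pointwise Bregman bound
  have hB : ∑ p : ι × ι, e p.1 p.2 ^ 2 * (3 * (lam p.1 - mu p.2) ^ 2 / (2 * lam p.1 + 4 * mu p.2))
      ≤ ∑ p : ι × ι, e p.1 p.2 ^ 2 *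
        (lam p.1 * Real.log (lam p.1) - lam p.1 * Real.log (mu p.2) - lam p.1 + mu p.2) := by
    apply Finset.sum_le_sum
    intro p _
    exact mul_le_mul_of_nonneg_left (scalar_bregman (hlam p.1) (hmu p.2)) (sq_nonneg _)
  -- the -lam + mu part sums to zero
  have hzero : ∑ p : ι × ι, e p.1 p.2 ^ 2 * (- lam p.1 + mu p.2) = 0 := by
    have hsplit : ∀ p : ι × ι, e p.1 p.2 ^ 2 * (- lam p.1 + mu p.2) =
        -(lam p.1 * e p.1 p.2 ^ 2) + mu p.2 * e p.1 p.2 ^ 2 := fun p => by ring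
    rw [Fintype.sum_congr _ _ hsplit, Finset.sum_add_distrib]
    have h1 : ∑ p : ι × ι, -(lam p.1 * e p.1 p.2 ^ 2) = -1 := by
      rw [Finset.sum_neg_distrib, Fintype.sum_prod_type]
      have : ∀ i : ι, ∑ j, lam i * e i j ^ 2 = lam i := fun i => by
        rw [← Finset.mul_sum, herow i, mul_one]
      rw [Fintype.sum_congr _ _ this, hlam1]
    have h2 : ∑ p : ι × ι, mu p.2 * e p.1 p.2 ^ 2 = 1 := by
      rw [Fintype.sum_prod_type_right]
      have : ∀ j : ι, ∑ i, mu j * e i j ^ 2 = mu j := fun j => by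
        rw [← Finset.mul_sum, hecol j, mul_one]
      rw [Fintype.sum_congr _ _ this, hmu1]
    rw [h1, h2]; norm_num
  have hfinal : ∑ p : ι × ι, e p.1 p.2 ^ 2 *
        (lam p.1 * Real.log (lam p.1) - lam p.1 * Real.log (mu p.2) - lam p.1 + mu p.2)
      = ∑ i, ∑ j, e i j ^ 2 * (lam i * Real.log (lam i) - lam i * Real.log (mu j)) := by
    have : ∀ p : ι × ι, e p.1 p.2 ^ 2 *
        (lam p.1 * Real.log (lam p.1) - lam p.1 * Real.log (mu p.2) - lam p.1 + mu p.2)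
        = e p.1 p.2 ^ 2 * (lam p.1 * Real.log (lam p.1) - lam p.1 * Real.log (mu p.2))
          + e p.1 p.2 ^ 2 * (- lam p.1 + mu p.2) := fun p => by ring
    rw [Fintype.sum_congr _ _ this, Finset.sum_add_distrib, hzero, add_zero,
      Fintype.sum_prod_type]
  have hconv : ∑ p : ι × ι, (lam p.1 - mu p.2) * r p.1 p.2
      = ∑ i, ∑ j, (lam i - mu j) * r i j := Fintype.sum_prod_type _
  rw [← hconv, ← hfinal]
  linarith [hQ, hB]

end ScalarLemmas

section MatrixHelpers

variable {ι : Type*} [Fintype ι] [DecidableEq ι]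

private lemma rclike_ofReal_eq : (RCLike.ofReal : ℝ → ℂ) = Complex.ofReal := rfl

private lemma trace_diag_mul (d : ι → ℂ) (M : Matrix ι ι ℂ) :
    (Matrix.diagonal d * M).trace = ∑ i, d i * M i i := by
  simp [Matrix.trace, Matrix.diag, Matrix.diagonal_mul]

private lemma trace_conj_pair (V W : Matrix ι ι ℂ) (d₁ d₂ : ι → ℂ) :
    ((V * Matrix.diagonal d₁ * star V) * (W * Matrix.diagonal d₂ * star W)).trace
      = ∑ i, ∑ j, d₁ i * d₂ j * ((star V * W) i j * (star W * V) j i) := by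
  have h1 : (V * Matrix.diagonal d₁ * star V) * (W * Matrix.diagonal d₂ * star W)
      = V * (Matrix.diagonal d₁ * ((star V * W) * (Matrix.diagonal d₂ * star W))) := by
    simp only [Matrix.mul_assoc]
  rw [h1, Matrix.trace_mul_comm]
  have h2 : Matrix.diagonal d₁ * ((star V * W) * (Matrix.diagonal d₂ * star W)) * V
      = Matrix.diagonal d₁ * ((star V * W) * (Matrix.diagonal d₂ * (star W * V))) := by
    simp only [Matrix.mul_assoc]
  rw [h2, trace_diag_mul]
  refine Finset.sum_congr rfl fun i _ => ?_
  rw [Matrix.mul_apply, Finset.mul_sum]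
  refine Finset.sum_congr rfl fun j _ => ?_
  rw [Matrix.diagonal_mul]
  ring

private lemma conj_mul_conj (V : Matrix ι ι ℂ) (hV : star V * V = 1) (P Q : Matrix ι ι ℂ) :
    (V * P * star V) * (V * Q * star V) = V * (P * Q) * star V := by
  have h : (V * P * star V) * (V * Q * star V)
      = V * (P * ((star V * V) * (Q * star V))) := by simp only [Matrix.mul_assoc]
  rw [h, hV, one_mul]
  simp only [Matrix.mul_assoc]

private lemma trace_conj (V : Matrix ι ι ℂ) (hV : star V * V = 1) (Z : Matrix ι ι ℂ) :
    (V * Z * star V).trace = Z.trace := by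
  rw [Matrix.trace_mul_cycle, hV, one_mul]

private lemma trace_mul_conj_diag (U V : Matrix ι ι ℂ) (d : ι → ℂ) :
    (U * (V * Matrix.diagonal d * star V)).trace
      = ∑ i, d i * (star V * (U * V)) i i := by
  rw [Matrix.trace_mul_comm]
  rw [Matrix.mul_assoc (V * Matrix.diagonal d) (star V) U]
  rw [Matrix.trace_mul_cycle]
  rw [Matrix.trace_mul_comm]
  rw [show (star V * U) * V = star V * (U * V) from Matrix.mul_assoc _ _ _]
  rw [trace_diag_mul]

private lemma row_sum_abs {M : Matrix ι ι ℂ} (h : M * star M = 1) (i : ι) :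
    ∑ j, ‖M i j‖ ^ 2 = 1 := by
  have h1 : (M * star M) i i = (1 : Matrix ι ι ℂ) i i := by rw [h]
  rw [Matrix.mul_apply, Matrix.one_apply_eq] at h1
  have h2 : ∀ j : ι, M i j * (star M) j i = ((‖M i j‖ ^ 2 : ℝ) : ℂ) := by
    intro j
    rw [Matrix.star_apply, Complex.star_def, Complex.mul_conj, Complex.sq_norm]
  rw [Finset.sum_congr rfl (fun j _ => h2 j), ← Complex.ofReal_sum] at h1
  exact_mod_cast h1

private lemma col_sum_abs {M : Matrix ι ι ℂ} (h : star M * M = 1) (j : ι) :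
    ∑ i, ‖M i j‖ ^ 2 = 1 := by
  have h' : star M * star (star M) = 1 := by rwa [star_star]
  have h2 := row_sum_abs h' j
  simpa [Matrix.star_apply] using h2

end MatrixHelpers

/-- Quantum Pinsker-type inequality: for trace-one Hermitian positive definite matrices
`X` and `Y`, the relative entropy `Re tr(X (log X − log Y))` dominates half the squared
trace-one norm of `X − Y` (sum of absolute values of the eigenvalues of `X − Y`). -/
theorem quantum_relative_entropy_strong_convexity
    (n : ℕ) (hn : 1 ≤ n)
    (X Y : Matrix (Fin n) (Fin n) ℂ)
    (hX : X.PosDef) (hY : Y.PosDef)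
    (hXtr : X.trace = 1) (hYtr : Y.trace = 1) :
    (1 / 2) * (∑ i, |(hX.1.sub hY.1).eigenvalues i|)^2 ≤
      (X * (hX.1.cfc Real.log - hY.1.cfc Real.log)).trace.re := by
  classical
  set lam := hX.1.eigenvalues with hlam_def
  set mu := hY.1.eigenvalues with hmu_def
  set nu := (hX.1.sub hY.1).eigenvalues with hnu_def
  set A : Matrix (Fin n) (Fin n) ℂ := (hX.1.eigenvectorUnitary : Matrix (Fin n) (Fin n) ℂ)
    with hA_def
  set B : Matrix (Fin n) (Fin n) ℂ := (hY.1.eigenvectorUnitary : Matrix (Fin n) (Fin n) ℂ)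
    with hB_def
  set W : Matrix (Fin n) (Fin n) ℂ :=
    ((hX.1.sub hY.1).eigenvectorUnitary : Matrix (Fin n) (Fin n) ℂ) with hW_def
  have hA1 : star A * A = 1 := Matrix.mem_unitaryGroup_iff'.mp (hX.1.eigenvectorUnitary).2
  have hA2 : A * star A = 1 := Matrix.mem_unitaryGroup_iff.mp (hX.1.eigenvectorUnitary).2
  have hB1 : star B * B = 1 := Matrix.mem_unitaryGroup_iff'.mp (hY.1.eigenvectorUnitary).2
  have hB2 : B * star B = 1 := Matrix.mem_unitaryGroup_iff.mp (hY.1.eigenvectorUnitary).2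
  have hW1 : star W * W = 1 :=
    Matrix.mem_unitaryGroup_iff'.mp ((hX.1.sub hY.1).eigenvectorUnitary).2
  have hW2 : W * star W = 1 :=
    Matrix.mem_unitaryGroup_iff.mp ((hX.1.sub hY.1).eigenvectorUnitary).2
  have hXspec : X = A * Matrix.diagonal (RCLike.ofReal ∘ lam) * star A := hX.1.spectral_theorem
  have hYspec : Y = B * Matrix.diagonal (RCLike.ofReal ∘ mu) * star B := hY.1.spectral_theorem
  have hDspec : X - Y = W * Matrix.diagonal (RCLike.ofReal ∘ nu) * star W :=
    (hX.1.sub hY.1).spectral_theorem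
  have hcfcX : hX.1.cfc Real.log
      = A * Matrix.diagonal (RCLike.ofReal ∘ Real.log ∘ lam) * star A := rfl
  have hcfcY : hY.1.cfc Real.log
      = B * Matrix.diagonal (RCLike.ofReal ∘ Real.log ∘ mu) * star B := rfl
  -- the sign unitary of X - Y
  set sg : Fin n → ℝ := fun k => if nu k < 0 then -1 else 1 with hsg_def
  set U : Matrix (Fin n) (Fin n) ℂ := W * Matrix.diagonal (RCLike.ofReal ∘ sg) * star W
    with hU_def
  have hUU : U * U = 1 := by
    rw [hU_def, conj_mul_conj W hW1, Matrix.diagonal_mul_diagonal]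
    have hone : (fun k => (RCLike.ofReal ∘ sg) k * (RCLike.ofReal ∘ sg) k)
        = fun _ : Fin n => (1 : ℂ) := by
      funext k
      by_cases h : nu k < 0 <;>
        simp [hsg_def, h, Function.comp, rclike_ofReal_eq]
    rw [hone]
    have hdiag1 : Matrix.diagonal (fun _ : Fin n => (1 : ℂ)) = (1 : Matrix (Fin n) (Fin n) ℂ) :=
      Matrix.diagonal_one
    rw [hdiag1, Matrix.mul_one, hW2]
  have hDiagStar : star (Matrix.diagonal (RCLike.ofReal ∘ sg) : Matrix (Fin n) (Fin n) ℂ)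
      = Matrix.diagonal (RCLike.ofReal ∘ sg) := by
    have hstar : star (RCLike.ofReal ∘ sg : Fin n → ℂ) = RCLike.ofReal ∘ sg := by
      funext k
      simp [Pi.star_apply, Function.comp, rclike_ofReal_eq, Complex.star_def,
        Complex.conj_ofReal]
    rw [Matrix.star_eq_conjTranspose, Matrix.diagonal_conjTranspose, hstar]
  have hUstar : star U = U := by
    rw [hU_def, star_mul, star_mul, star_star, hDiagStar]
    simp only [Matrix.mul_assoc]
  set E : Matrix (Fin n) (Fin n) ℂ := star A * B with hE_def
  set F : Matrix (Fin n) (Fin n) ℂ := star A * (U * B) with hF_def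
  have hEstar : star E = star B * A := by rw [hE_def, star_mul, star_star]
  have hFstar : star F = star B * (U * A) := by
    rw [hF_def, star_mul, star_mul, star_star, hUstar, Matrix.mul_assoc]
  have hEE : E * star E = 1 := by
    rw [hE_def, hEstar]
    have h : (star A * B) * (star B * A) = star A * ((B * star B) * A) := by
      simp only [Matrix.mul_assoc]
    rw [h, hB2, one_mul, hA1]
  have hE'E : star E * E = 1 := by
    rw [hE_def, hEstar]
    have h : (star B * A) * (star A * B) = star B * ((A * star A) * B) := by
      simp only [Matrix.mul_assoc]
    rw [h, hA2, one_mul, hB1]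
  have hFF : F * star F = 1 := by
    rw [hF_def, hFstar]
    have h : (star A * (U * B)) * (star B * (U * A))
        = star A * (U * ((B * star B) * (U * A))) := by simp only [Matrix.mul_assoc]
    rw [h, hB2, one_mul]
    have h2 : star A * (U * (U * A)) = star A * ((U * U) * A) := by
      simp only [Matrix.mul_assoc]
    rw [h2, hUU, one_mul, hA1]
  have hF'F : star F * F = 1 := by
    rw [hF_def, hFstar]
    have h : (star B * (U * A)) * (star A * (U * B))
        = star B * (U * ((A * star A) * (U * B))) := by simp only [Matrix.mul_assoc]
    rw [h, hA2, one_mul]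
    have h2 : star B * (U * (U * B)) = star B * ((U * U) * B) := by
      simp only [Matrix.mul_assoc]
    rw [h2, hUU, one_mul, hB1]
  set ee : Fin n → Fin n → ℝ := fun i j => ‖E i j‖ with hee_def
  set dd : Fin n → Fin n → ℝ := fun i j => ‖F i j‖ with hdd_def
  set rr : Fin n → Fin n → ℝ := fun i j => ((starRingEnd ℂ) (F i j) * E i j).re with hrr_def
  have hlam_pos : ∀ i, 0 < lam i := fun i => hX.eigenvalues_pos i
  have hmu_pos : ∀ j, 0 < mu j := fun j => hY.eigenvalues_pos j
  have hlam1 : ∑ i, lam i = 1 := by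
    have h1 : X.trace = ∑ i, ((lam i : ℝ) : ℂ) := by
      conv_lhs => rw [hXspec]
      rw [Matrix.trace_mul_cycle, hA1, one_mul, Matrix.trace_diagonal]
      simp [Function.comp, rclike_ofReal_eq]
    rw [hXtr] at h1
    have h2 := congrArg Complex.re h1.symm
    simpa [Complex.re_sum] using h2
  have hmu1 : ∑ j, mu j = 1 := by
    have h1 : Y.trace = ∑ j, ((mu j : ℝ) : ℂ) := by
      conv_lhs => rw [hYspec]
      rw [Matrix.trace_mul_cycle, hB1, one_mul, Matrix.trace_diagonal]
      simp [Function.comp, rclike_ofReal_eq]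
    rw [hYtr] at h1
    have h2 := congrArg Complex.re h1.symm
    simpa [Complex.re_sum] using h2
  have hee_row : ∀ i, ∑ j, ee i j ^ 2 = 1 := fun i => row_sum_abs hEE i
  have hee_col : ∀ j, ∑ i, ee i j ^ 2 = 1 := fun j => col_sum_abs hE'E j
  have hdd_row : ∀ i, ∑ j, dd i j ^ 2 = 1 := fun i => row_sum_abs hFF i
  have hdd_col : ∀ j, ∑ i, dd i j ^ 2 = 1 := fun j => col_sum_abs hF'F j
  have hee_nonneg : ∀ i j, 0 ≤ ee i j := fun i j => (norm_nonneg _)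
  have hdd_nonneg : ∀ i j, 0 ≤ dd i j := fun i j => (norm_nonneg _)
  have hrr_le : ∀ i j, |rr i j| ≤ ee i j * dd i j := by
    intro i j
    calc |rr i j| ≤ ‖(starRingEnd ℂ) (F i j) * E i j‖ := Complex.abs_re_le_norm _
      _ = ‖F i j‖ * ‖E i j‖ := by rw [norm_mul, Complex.norm_conj]
      _ = ee i j * dd i j := by rw [hee_def, hdd_def]; ring
  -- real part identity for rr
  have hrr_alt : ∀ i j, (F i j * (starRingEnd ℂ) (E i j)).re = rr i j := by
    intro i j
    rw [hrr_def]
    have hc : (starRingEnd ℂ) ((starRingEnd ℂ) (F i j) * E i j)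
        = F i j * (starRingEnd ℂ) (E i j) := by
      rw [map_mul, Complex.conj_conj]
    rw [← hc, Complex.conj_re]
  -- trace of X * cfc log X
  have htr1 : (X * hX.1.cfc Real.log).trace.re = ∑ i, lam i * Real.log (lam i) := by
    have h1 : X * hX.1.cfc Real.log
        = A * (Matrix.diagonal (RCLike.ofReal ∘ lam)
            * Matrix.diagonal (RCLike.ofReal ∘ Real.log ∘ lam)) * star A := by
      rw [hcfcX, hXspec]; exact conj_mul_conj A hA1 _ _
    rw [h1, trace_conj A hA1, Matrix.diagonal_mul_diagonal, Matrix.trace_diagonal,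
      Complex.re_sum]
    refine Finset.sum_congr rfl fun i _ => ?_
    simp [Function.comp, rclike_ofReal_eq, ← Complex.ofReal_mul]
  -- trace of X * cfc log Y
  have htr2 : (X * hY.1.cfc Real.log).trace.re
      = ∑ i, ∑ j, ee i j ^ 2 * (lam i * Real.log (mu j)) := by
    have h1 : X * hY.1.cfc Real.log
        = (A * Matrix.diagonal (RCLike.ofReal ∘ lam) * star A)
          * (B * Matrix.diagonal (RCLike.ofReal ∘ Real.log ∘ mu) * star B) := by
      rw [← hXspec, ← hcfcY]
    rw [h1, trace_conj_pair, Complex.re_sum]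
    refine Finset.sum_congr rfl fun i _ => ?_
    rw [Complex.re_sum]
    refine Finset.sum_congr rfl fun j _ => ?_
    rw [← hE_def]
    have hq : (star B * A) j i = (starRingEnd ℂ) (E i j) := by
      rw [← hEstar, Matrix.star_apply, Complex.star_def]
    rw [hq, Complex.mul_conj]
    simp only [Function.comp, rclike_ofReal_eq]
    rw [← Complex.ofReal_mul, ← Complex.ofReal_mul, Complex.ofReal_re]
    rw [hee_def]
    rw [Complex.sq_norm]
    ring
  -- trace of U * X
  have htrUX : (U * X).trace.re = ∑ i, ∑ j, lam i * rr i j := by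
    have hkey : star A * (U * A) = F * star E := by
      rw [hF_def, hEstar]
      have h : (star A * (U * B)) * (star B * A) = star A * (U * ((B * star B) * A)) := by
        simp only [Matrix.mul_assoc]
      rw [h, hB2, one_mul]
    have h1 : (U * X).trace = ∑ i, (Complex.ofReal (lam i)) * (F * star E) i i := by
      conv_lhs => rw [hXspec]
      rw [trace_mul_conj_diag, ← hkey]
      exact Finset.sum_congr rfl fun i _ => rfl
    rw [h1, Complex.re_sum]
    refine Finset.sum_congr rfl fun i _ => ?_
    rw [Matrix.mul_apply, Finset.mul_sum, Complex.re_sum]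
    refine Finset.sum_congr rfl fun j _ => ?_
    rw [Matrix.star_apply, Complex.star_def, Complex.re_ofReal_mul, hrr_alt]
  -- trace of U * Y
  have htrUY : (U * Y).trace.re = ∑ j, ∑ i, mu j * rr i j := by
    have hkey : star B * (U * B) = star F * E := by
      rw [hFstar, hE_def]
      have h : (star B * (U * A)) * (star A * B) = star B * (U * ((A * star A) * B)) := by
        simp only [Matrix.mul_assoc]
      rw [h, hA2, one_mul]
    have h1 : (U * Y).trace = ∑ j, (Complex.ofReal (mu j)) * (star F * E) j j := by
      conv_lhs => rw [hYspec]
      rw [trace_mul_conj_diag, hkey]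
      exact Finset.sum_congr rfl fun j _ => rfl
    rw [h1, Complex.re_sum]
    refine Finset.sum_congr rfl fun j _ => ?_
    rw [Matrix.mul_apply, Finset.mul_sum, Complex.re_sum]
    refine Finset.sum_congr rfl fun i _ => ?_
    rw [Matrix.star_apply, Complex.star_def, Complex.re_ofReal_mul]
  -- trace of U * (X - Y) in the W basis
  have htrUD : (U * (X - Y)).trace.re = ∑ k, |nu k| := by
    have h1 : U * (X - Y)
        = W * (Matrix.diagonal (RCLike.ofReal ∘ sg)
            * Matrix.diagonal (RCLike.ofReal ∘ nu)) * star W := by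
      rw [hDspec, hU_def]; exact conj_mul_conj W hW1 _ _
    rw [h1, trace_conj W hW1, Matrix.diagonal_mul_diagonal, Matrix.trace_diagonal,
      Complex.re_sum]
    refine Finset.sum_congr rfl fun k _ => ?_
    simp only [Function.comp, Pi.mul_apply, rclike_ofReal_eq]
    rw [← Complex.ofReal_mul, Complex.ofReal_re]
    rw [hsg_def]
    by_cases h : nu k < 0
    · simp [h, abs_of_neg h]
    · simp [h, abs_of_nonneg (not_lt.mp h)]
  -- assembling T
  have hTsum : ∑ k, |nu k| = ∑ i, ∑ j, (lam i - mu j) * rr i j := by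
    rw [← htrUD, mul_sub, Matrix.trace_sub, Complex.sub_re, htrUX, htrUY]
    rw [Finset.sum_comm (f := fun j i => mu j * rr i j)]
    rw [← Finset.sum_sub_distrib]
    refine Finset.sum_congr rfl fun i _ => ?_
    rw [← Finset.sum_sub_distrib]
    exact Finset.sum_congr rfl fun j _ => by ring
  -- assembling the relative entropy
  have hRHS : (X * (hX.1.cfc Real.log - hY.1.cfc Real.log)).trace.re
      = ∑ i, ∑ j, ee i j ^ 2 * (lam i * Real.log (lam i) - lam i * Real.log (mu j)) := by
    rw [mul_sub, Matrix.trace_sub, Complex.sub_re, htr1, htr2]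
    rw [← Finset.sum_sub_distrib]
    refine Finset.sum_congr rfl fun i _ => ?_
    have expand : ∑ j, ee i j ^ 2 * (lam i * Real.log (lam i) - lam i * Real.log (mu j))
        = (∑ j, ee i j ^ 2) * (lam i * Real.log (lam i))
          - ∑ j, ee i j ^ 2 * (lam i * Real.log (mu j)) := by
      rw [Finset.sum_mul, ← Finset.sum_sub_distrib]
      exact Finset.sum_congr rfl fun j _ => by ring
    rw [expand, hee_row i, one_mul]
  have hKEY := key_sum lam mu ee dd rr hlam_pos hmu_pos hee_nonneg hdd_nonneg hrr_le
    hee_row hee_col hdd_row hdd_col hlam1 hmu1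
  rw [hRHS, hTsum]
  exact hKEY
end

section
/- Let d ≥ 1 and let x, y ∈ ℝ^d with ‖x‖₂ < 1/2, ‖y‖₂ < 1/2 and y ≠ 0. Then (1/2+‖x‖₂)·log(1/2+‖x‖₂) + (1/2−‖x‖₂)·log(1/2−‖x‖₂) − (1/2)·log(1/4 − ‖y‖₂²) − (⟨x,y⟩/‖y‖₂)·log( (1/2+‖y‖₂)/(1/2−‖y‖₂) ) ≥ 2‖x−y‖₂². -/
open Set

noncomputable def socF (u : ℝ) : ℝ :=
  (1/2 + u) * Real.log (1/2 + u) + (1/2 - u) * Real.log (1/2 - u) - 2*u^2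

noncomputable def socF' (u : ℝ) : ℝ :=
  Real.log (1/2 + u) - Real.log (1/2 - u) - 4*u

lemma socF_hasDeriv {u : ℝ} (hu : u ∈ Ioo (-(1/2):ℝ) (1/2)) :
    HasDerivAt socF (socF' u) u := by
  obtain ⟨hu1, hu2⟩ := hu
  have h1 : (0:ℝ) < 1/2 + u := by linarith
  have h2 : (0:ℝ) < 1/2 - u := by linarith
  have d1 : HasDerivAt (fun u : ℝ => 1/2 + u) 1 u := by
    simpa using (hasDerivAt_id u).const_add (1/2 : ℝ)
  have d2 : HasDerivAt (fun u : ℝ => 1/2 - u) (-1) u := by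
    simpa using (hasDerivAt_id u).const_sub (1/2 : ℝ)
  have l1 : HasDerivAt (fun u : ℝ => Real.log (1/2 + u)) (1/(1/2+u)) u := by
    simpa using d1.log h1.ne'
  have l2 : HasDerivAt (fun u : ℝ => Real.log (1/2 - u)) (-1/(1/2-u)) u := by
    simpa using d2.log h2.ne'
  have p : HasDerivAt (fun u : ℝ => 2*u^2) ((2:ℝ)*((2:ℕ)*u^(2-1))) u :=
    (hasDerivAt_pow 2 u).const_mul 2
  have := ((d1.mul l1).add (d2.mul l2)).sub p
  refine this.congr_deriv ?_
  have e1 : (1/2+u)*(1/(1/2+u)) = 1 := by rw [mul_one_div, div_self h1.ne']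
  have e2 : (1/2-u)*(-1/(1/2-u)) = -1 := by
    rw [neg_div, mul_neg, mul_one_div, div_self h2.ne']
  rw [e1, e2]
  unfold socF'
  push_cast
  ring

lemma socF'_hasDeriv {u : ℝ} (hu : u ∈ Ioo (-(1/2):ℝ) (1/2)) :
    HasDerivAt socF' ((1/2+u)⁻¹ + (1/2-u)⁻¹ - 4) u := by
  obtain ⟨hu1, hu2⟩ := hu
  have h1 : (0:ℝ) < 1/2 + u := by linarith
  have h2 : (0:ℝ) < 1/2 - u := by linarith
  have d1 : HasDerivAt (fun u : ℝ => 1/2 + u) 1 u := by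
    simpa using (hasDerivAt_id u).const_add (1/2 : ℝ)
  have d2 : HasDerivAt (fun u : ℝ => 1/2 - u) (-1) u := by
    simpa using (hasDerivAt_id u).const_sub (1/2 : ℝ)
  have l1 : HasDerivAt (fun u : ℝ => Real.log (1/2 + u)) (1/(1/2+u)) u := by
    simpa using d1.log h1.ne'
  have l2 : HasDerivAt (fun u : ℝ => Real.log (1/2 - u)) (-1/(1/2-u)) u := by
    simpa using d2.log h2.ne'
  have p : HasDerivAt (fun u : ℝ => 4*u) 4 u := by
    simpa using (hasDerivAt_id u).const_mul (4:ℝ)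
  have := (l1.sub l2).sub p
  refine this.congr_deriv ?_
  rw [neg_div]
  ring

lemma socF''_nonneg {u : ℝ} (hu : u ∈ Ioo (-(1/2):ℝ) (1/2)) :
    (0:ℝ) ≤ (1/2+u)⁻¹ + (1/2-u)⁻¹ - 4 := by
  obtain ⟨hu1, hu2⟩ := hu
  have h1 : (0:ℝ) < 1/2 + u := by linarith
  have h2 : (0:ℝ) < 1/2 - u := by linarith
  rw [sub_nonneg, inv_eq_one_div, inv_eq_one_div, div_add_div _ _ h1.ne' h2.ne',
    le_div_iff₀ (by positivity)]
  nlinarith [sq_nonneg u]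

lemma socF_convexOn : ConvexOn ℝ (Ioo (-(1/2):ℝ) (1/2)) socF := by
  have hint : interior (Ioo (-(1/2):ℝ) (1/2)) = Ioo (-(1/2):ℝ) (1/2) :=
    interior_Ioo
  refine convexOn_of_hasDerivWithinAt2_nonneg (convex_Ioo _ _)
    (fun u hu => (socF_hasDeriv hu).continuousAt.continuousWithinAt)
    (fun u hu => ((socF_hasDeriv (hint ▸ hu)).hasDerivWithinAt))
    (fun u hu => ((socF'_hasDeriv (hint ▸ hu)).hasDerivWithinAt))
    (fun u hu => socF''_nonneg (hint ▸ hu))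

lemma socF_tangent {a b : ℝ} (ha : a ∈ Ioo (-(1/2):ℝ) (1/2))
    (hb : b ∈ Ioo (-(1/2):ℝ) (1/2)) :
    socF b + socF' b * (a - b) ≤ socF a := by
  rcases lt_trichotomy a b with h | h | h
  · have := socF_convexOn.slope_le_of_hasDerivAt ha hb h (socF_hasDeriv hb)
    rw [slope_def_field] at this
    rw [div_le_iff₀ (by linarith)] at this
    nlinarith
  · simp [h]
  · have := socF_convexOn.le_slope_of_hasDerivAt hb ha h (socF_hasDeriv hb)
    rw [slope_def_field] at this
    rw [le_div_iff₀ (by linarith)] at this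
    nlinarith

lemma socF'_nonneg {b : ℝ} (hb0 : 0 ≤ b) (hb : b < 1/2) : 0 ≤ socF' b := by
  have hmono : MonotoneOn socF' (Ioo (-(1/2):ℝ) (1/2)) := by
    have hint : interior (Ioo (-(1/2):ℝ) (1/2)) = Ioo (-(1/2):ℝ) (1/2) :=
      interior_Ioo
    refine monotoneOn_of_deriv_nonneg (convex_Ioo _ _)
      (fun u hu => (socF'_hasDeriv hu).continuousAt.continuousWithinAt)
      (fun u hu => ((socF'_hasDeriv (hint ▸ hu)).differentiableAt.differentiableWithinAt))
      (fun u hu => ?_)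
    rw [(socF'_hasDeriv (hint ▸ hu)).deriv]
    exact socF''_nonneg (hint ▸ hu)
  have h0 : socF' 0 = 0 := by simp [socF']
  have := hmono (by constructor <;> norm_num) (⟨by linarith, hb⟩ : b ∈ Ioo (-(1/2):ℝ) (1/2)) hb0
  linarith [h0 ▸ this]

/-- Strong convexity of the spin-factor (second-order cone) negative entropy with respect
to the trace-one norm, written out explicitly: the Bregman divergence between the points
`(1/2, x)` and `(1/2, y)` of the generalized simplex dominates `2‖x − y‖²`. -/
theorem soc_entropy_strongly_convex
    (d : ℕ) (hd : 1 ≤ d) (x y : EuclideanSpace ℝ (Fin d))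
    (hx : ‖x‖ < 1/2) (hy : ‖y‖ < 1/2) (hy0 : y ≠ 0) :
    2 * ‖x - y‖^2 ≤
      (1/2 + ‖x‖) * Real.log (1/2 + ‖x‖) + (1/2 - ‖x‖) * Real.log (1/2 - ‖x‖)
        - (1/2) * Real.log (1/4 - ‖y‖^2)
        - ((inner ℝ x y : ℝ) / ‖y‖) * Real.log ((1/2 + ‖y‖) / (1/2 - ‖y‖)) := by
  set a := ‖x‖ with ha_def
  set b := ‖y‖ with hb_def
  have ha0 : 0 ≤ a := norm_nonneg x
  have hb0 : 0 < b := norm_pos_iff.mpr hy0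
  have hb1 : (0:ℝ) < 1/2 + b := by linarith
  have hb2 : (0:ℝ) < 1/2 - b := by linarith
  set t : ℝ := (inner ℝ x y : ℝ) / b with ht_def
  have hip : (inner ℝ x y : ℝ) = t * b := by rw [ht_def]; field_simp
  have hts : t ≤ a := by
    rw [ht_def, div_le_iff₀ hb0]
    exact real_inner_le_norm x y
  have hnorm : ‖x - y‖^2 = a^2 - 2*(t*b) + b^2 := by
    have h0 : ‖x - y‖^2 = ‖x‖^2 - 2*(inner ℝ x y : ℝ) + ‖y‖^2 := by
      exact norm_sub_sq_real x y
    rw [h0, ← ha_def, ← hb_def, hip]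
  -- log identities
  have hlog4 : Real.log (1/4 - b^2) = Real.log (1/2 + b) + Real.log (1/2 - b) := by
    rw [show (1/4 - b^2 : ℝ) = (1/2+b)*(1/2-b) by ring, Real.log_mul hb1.ne' hb2.ne']
  have hlogdiv : Real.log ((1/2 + b) / (1/2 - b)) = Real.log (1/2 + b) - Real.log (1/2 - b) :=
    Real.log_div hb1.ne' hb2.ne'
  have hmemA : a ∈ Ioo (-(1/2):ℝ) (1/2) := ⟨by linarith, hx⟩
  have hmemB : b ∈ Ioo (-(1/2):ℝ) (1/2) := ⟨by linarith, hy⟩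
  have htan := socF_tangent hmemA hmemB
  have hL := socF'_nonneg hb0.le hy
  have hprod : 0 ≤ (a - t) * socF' b := mul_nonneg (by linarith) hL
  rw [hnorm, hlog4, hlogdiv, ← hip, hip]
  simp only [socF, socF'] at htan hprod
  nlinarith [htan, hprod]
end
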